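/- arXiv:1706.02114 — 7 statements merged into one kernel-verified Lean document; each statement's English description precedes it below -/
import Mathlib

section
/- Let $d_1 \le \dots \le d_m$ be positive integers, $F = \{0,\dots,d_1-1\} \times \cdots \times \{0,\dots,d_m-1\}$, $k = \sum_{i=1}^m (d_i-1)$, and $1 \le v \le k$, $u = v-1$. Let $F_u = \{a \in F : \deg(a) = u\}$ where $\deg(a)$ is the sum of the coordinates. Choose $y \in F_v$ and let $a$ be the lexicographically largest element of $\{f \in F_u : f \le_{lex} y\}$. Then $a \le_P y$, i.e., every coordinate of $a$ is at most the corresponding coordinate of $y$. -/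
open Finset
open scoped Classical

set_option maxHeartbeats 1000000

noncomputable section

/-- The coordinate sum (degree) of a tuple in `F = ∏ [0, dᵢ-1]`. -/
def deg {m : ℕ} {d : Fin m → ℕ} (a : (i : Fin m) → Fin (d i)) : ℕ := ∑ i, (a i : ℕ)

/-- The mixed-radix value `∑ aᵢ ∏_{j>i} dⱼ` of a tuple. -/
def phi {m : ℕ} {d : Fin m → ℕ} (a : (i : Fin m) → Fin (d i)) : ℕ :=
  ∑ i, (a i : ℕ) * ∏ j ∈ Finset.Ioi i, d j

/-- The shadow of a finite set of tuples: all tuples dominating some element coordinatewise. -/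
def shadow {m : ℕ} {d : Fin m → ℕ} (S : Finset ((i : Fin m) → Fin (d i))) :
    Finset ((i : Fin m) → Fin (d i)) :=
  Finset.univ.filter (fun a => ∃ b ∈ S, b ≤ a)

/-- The part of the shadow consisting of tuples of degree exactly `v`. -/
def shadowAt {m : ℕ} {d : Fin m → ℕ} (v : ℕ) (S : Finset ((i : Fin m) → Fin (d i))) :
    Finset ((i : Fin m) → Fin (d i)) :=
  (shadow S).filter (fun a => deg a = v)

lemma sum_split_aux {m : ℕ} (g : Fin m → ℕ) (i : Fin m) :
    ∑ j, g j = ∑ j ∈ Finset.Iio i, g j + g i + ∑ j ∈ Finset.Ioi i, g j := by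
  have h1 : (Finset.univ : Finset (Fin m)) = Finset.Iio i ∪ Finset.Ici i := by
    ext p
    simp only [Finset.mem_univ, Finset.mem_union, Finset.mem_Iio, Finset.mem_Ici, true_iff]
    exact lt_or_ge p i
  rw [h1, Finset.sum_union, Finset.Ici_eq_cons_Ioi, Finset.sum_cons]
  · ring
  · rw [Finset.disjoint_left]
    intro p hp hp'
    simp only [Finset.mem_Iio] at hp
    simp only [Finset.mem_Ici] at hp'
    exact absurd hp' (not_le.mpr hp)

lemma sum_split_aux2 {m : ℕ} (g : Fin m → ℕ) {i j : Fin m} (hij : i < j) :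
    ∑ p ∈ Finset.Ioi i, g p
      = ∑ p ∈ Finset.Ioo i j, g p + g j + ∑ p ∈ Finset.Ioi j, g p := by
  have h1 : Finset.Ioi i = Finset.Ioo i j ∪ Finset.Ici j := by
    ext p
    simp only [Finset.mem_Ioi, Finset.mem_union, Finset.mem_Ioo, Finset.mem_Ici]
    constructor
    · intro hp
      rcases lt_or_ge p j with h | h
      exacts [Or.inl ⟨hp, h⟩, Or.inr h]
    · rintro (⟨h, _⟩ | h)
      exacts [h, lt_of_lt_of_le hij h]
  rw [h1, Finset.sum_union, Finset.Ici_eq_cons_Ioi, Finset.sum_cons]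
  · ring
  · rw [Finset.disjoint_left]
    intro p hp hp'
    simp only [Finset.mem_Ioo] at hp
    simp only [Finset.mem_Ici] at hp'
    exact absurd hp' (not_le.mpr hp.2)

lemma coe_update_aux {m : ℕ} {d : Fin m → ℕ} (x : (i : Fin m) → Fin (d i))
    (p : Fin m) (w : Fin (d p)) :
    (fun j => ((Function.update x p w j : ℕ))) = Function.update (fun j => (x j : ℕ)) p (w : ℕ) := by
  funext j
  rcases eq_or_ne j p with rfl | h
  · simp
  · simp [Function.update_of_ne h]

lemma deg_update_aux {m : ℕ} {d : Fin m → ℕ} (x : (i : Fin m) → Fin (d i))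
    (p : Fin m) (w : Fin (d p)) :
    deg (Function.update x p w) + (x p : ℕ) = deg x + (w : ℕ) := by
  have h : deg (Function.update x p w)
      = ∑ j, Function.update (fun j => (x j : ℕ)) p (w : ℕ) j := by
    rw [deg, ← coe_update_aux]
  rw [h, Finset.sum_update_of_mem (Finset.mem_univ p),
    deg, Finset.sum_eq_sum_sdiff_singleton_add (Finset.mem_univ p) (fun j => (x j : ℕ))]
  omega

/-- Exchange: increment coordinate `p`, decrement a later coordinate `l`. -/
lemma exchange_aux {m : ℕ} {d : Fin m → ℕ} (x : (i : Fin m) → Fin (d i))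
    {p l : Fin m} (hpl : p < l) (hp : (x p : ℕ) + 1 < d p) (hl : 0 < (x l : ℕ)) :
    ∃ f : (i : Fin m) → Fin (d i),
      deg f = deg x ∧ (∀ q, q < p → f q = x q) ∧ (f p : ℕ) = (x p : ℕ) + 1 := by
  classical
  have hlp : l ≠ p := ne_of_gt hpl
  have hl' : (x l : ℕ) - 1 < d l := by have := (x l).isLt; omega
  refine ⟨Function.update (Function.update x p ⟨(x p : ℕ) + 1, hp⟩) l ⟨(x l : ℕ) - 1, hl'⟩,
    ?_, ?_, ?_⟩
  · have h1 := deg_update_aux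
      (Function.update x p (⟨(x p : ℕ) + 1, hp⟩ : Fin (d p))) l
      (⟨(x l : ℕ) - 1, hl'⟩ : Fin (d l))
    rw [Function.update_of_ne hlp] at h1
    have h2 := deg_update_aux x p (⟨(x p : ℕ) + 1, hp⟩ : Fin (d p))
    have e1 : ((⟨(x p : ℕ) + 1, hp⟩ : Fin (d p)) : ℕ) = (x p : ℕ) + 1 := rfl
    have e2 : ((⟨(x l : ℕ) - 1, hl'⟩ : Fin (d l)) : ℕ) = (x l : ℕ) - 1 := rfl
    omega
  · intro q hq
    rw [Function.update_of_ne (ne_of_lt (hq.trans hpl)), Function.update_of_ne (ne_of_lt hq)]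
  · rw [Function.update_of_ne (ne_of_lt hpl), Function.update_self]

/-- Decrement a single coordinate `l` (assumed positive). -/
lemma decr_aux {m : ℕ} {d : Fin m → ℕ} (x : (i : Fin m) → Fin (d i))
    {l : Fin m} (hl : 0 < (x l : ℕ)) :
    ∃ f : (i : Fin m) → Fin (d i),
      deg f + 1 = deg x ∧ (∀ q, q < l → f q = x q) ∧ (f l : ℕ) + 1 = (x l : ℕ) := by
  classical
  have hl' : (x l : ℕ) - 1 < d l := by have := (x l).isLt; omega
  refine ⟨Function.update x l ⟨(x l : ℕ) - 1, hl'⟩, ?_, ?_, ?_⟩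
  · have h1 := deg_update_aux x l (⟨(x l : ℕ) - 1, hl'⟩ : Fin (d l))
    have e1 : ((⟨(x l : ℕ) - 1, hl'⟩ : Fin (d l)) : ℕ) = (x l : ℕ) - 1 := rfl
    omega
  · intro q hq
    rw [Function.update_of_ne (ne_of_lt hq)]
  · rw [Function.update_self]
    show (x l : ℕ) - 1 + 1 = (x l : ℕ)
    omega

lemma lex_contra_aux {m : ℕ} {d : Fin m → ℕ} {x z : (i : Fin m) → Fin (d i)}
    (h1 : toLex x < toLex z) (h2 : toLex z ≤ toLex x) : False :=
  absurd h1 h2.not_gt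

/-- If `y ∈ F` has degree `v` with `1 ≤ v ≤ k`, and `a` is the lexicographically largest
element of degree `u = v - 1` with `a ≤_lex y`, then `a ≤_P y` coordinatewise. -/
theorem stmt2 {m : ℕ} (d : Fin m → ℕ) (hd : ∀ i, 0 < d i) (hmono : Monotone d)
    (v : ℕ) (hv1 : 1 ≤ v) (hvk : v ≤ ∑ i, (d i - 1))
    (y : (i : Fin m) → Fin (d i)) (hy : deg y = v)
    (a : (i : Fin m) → Fin (d i)) (hadeg : deg a = v - 1)
    (haley : toLex a ≤ toLex y)
    (hamax : ∀ f : (i : Fin m) → Fin (d i),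
      deg f = v - 1 → toLex f ≤ toLex y → toLex f ≤ toLex a) :
    a ≤ y := by
  classical
  have hsum : deg a + 1 = deg y := by rw [hadeg, hy]; omega
  have hane : toLex a ≠ toLex y := by
    intro h
    have : a = y := toLex.injective h
    rw [this, hy] at hadeg
    omega
  have halt : toLex a < toLex y := haley.lt_of_ne hane
  obtain ⟨i, hpre, hi⟩ := halt
  have hiv : (a i : ℕ) < (y i : ℕ) := hi
  have hprev : ∀ j, j < i → (a j : ℕ) = (y j : ℕ) := fun j hj => congrArg Fin.val (hpre j hj)
  have hsa : deg a
      = ∑ j ∈ Finset.Iio i, (a j : ℕ) + (a i : ℕ) + ∑ j ∈ Finset.Ioi i, (a j : ℕ) :=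
    sum_split_aux (fun j => (a j : ℕ)) i
  have hsy : deg y
      = ∑ j ∈ Finset.Iio i, (y j : ℕ) + (y i : ℕ) + ∑ j ∈ Finset.Ioi i, (y j : ℕ) :=
    sum_split_aux (fun j => (y j : ℕ)) i
  have hIio : ∑ j ∈ Finset.Iio i, (a j : ℕ) = ∑ j ∈ Finset.Iio i, (y j : ℕ) :=
    Finset.sum_congr rfl fun j hj => hprev j (Finset.mem_Iio.mp hj)
  have key : (a i : ℕ) + ∑ j ∈ Finset.Ioi i, (a j : ℕ) + 1
      = (y i : ℕ) + ∑ j ∈ Finset.Ioi i, (y j : ℕ) := by omega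
  -- Step 1: a i + 1 = y i
  have step1 : (a i : ℕ) + 1 = (y i : ℕ) := by
    by_contra h1
    have h1' : (a i : ℕ) + 1 < (y i : ℕ) := by omega
    have hex : ∃ l ∈ Finset.Ioi i, (a l : ℕ) ≠ 0 := by
      by_contra hc
      push_neg at hc
      have hz : ∑ j ∈ Finset.Ioi i, (a j : ℕ) = 0 := Finset.sum_eq_zero hc
      omega
    obtain ⟨l, hlm, hl0⟩ := hex
    have hil : i < l := Finset.mem_Ioi.mp hlm
    have hp : (a i : ℕ) + 1 < d i := by have := (y i).isLt; omega
    obtain ⟨f, hdf, hagree, hfp⟩ := exchange_aux a hil hp (Nat.pos_of_ne_zero hl0)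
    have hdegf : deg f = v - 1 := by rw [hdf, hadeg]
    have hlt1 : toLex a < toLex f :=
      ⟨i, fun q hq => (hagree q hq).symm, Fin.lt_def.mpr (show (a i : ℕ) < (f i : ℕ) by omega)⟩
    have hlt2 : toLex f < toLex y :=
      ⟨i, fun q hq => (hagree q hq).trans (hpre q hq), Fin.lt_def.mpr (show (f i : ℕ) < (y i : ℕ) by omega)⟩
    exact lex_contra_aux hlt1 (hamax f hdegf hlt2.le)
  have keq : ∑ j ∈ Finset.Ioi i, (a j : ℕ) = ∑ j ∈ Finset.Ioi i, (y j : ℕ) := by omega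
  -- Step 2
  by_contra hcon
  have hex0 : ∃ j0, (y j0 : ℕ) < (a j0 : ℕ) := by
    by_contra hc
    push_neg at hc
    exact hcon (fun j => hc j)
  obtain ⟨j0, hj0⟩ := hex0
  set T : Finset (Fin m) := Finset.univ.filter (fun p => i < p ∧ a p ≠ y p) with hT
  have hj0T : j0 ∈ T := by
    have hij0 : i < j0 := by
      rcases lt_trichotomy j0 i with h | h | h
      · exact absurd (hprev j0 h) (by omega)
      · subst h; omega
      · exact h
    simp only [hT, Finset.mem_filter, Finset.mem_univ, true_and]
    exact ⟨hij0, fun h => by rw [h] at hj0; omega⟩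
  have hTne : T.Nonempty := ⟨j0, hj0T⟩
  set j := T.min' hTne with hj
  have hjT : j ∈ T := T.min'_mem hTne
  have hij : i < j := (Finset.mem_filter.mp hjT).2.1
  have hjne : a j ≠ y j := (Finset.mem_filter.mp hjT).2.2
  have hmid : ∀ p, i < p → p < j → a p = y p := by
    intro p hp1 hp2
    by_contra hpne
    have hpT : p ∈ T := by
      simp only [hT, Finset.mem_filter, Finset.mem_univ, true_and]
      exact ⟨hp1, hpne⟩
    exact absurd (T.min'_le p hpT) (not_le.mpr hp2)
  have hsa2 : ∑ p ∈ Finset.Ioi i, (a p : ℕ)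
      = ∑ p ∈ Finset.Ioo i j, (a p : ℕ) + (a j : ℕ) + ∑ p ∈ Finset.Ioi j, (a p : ℕ) :=
    sum_split_aux2 (fun p => (a p : ℕ)) hij
  have hsy2 : ∑ p ∈ Finset.Ioi i, (y p : ℕ)
      = ∑ p ∈ Finset.Ioo i j, (y p : ℕ) + (y j : ℕ) + ∑ p ∈ Finset.Ioi j, (y p : ℕ) :=
    sum_split_aux2 (fun p => (y p : ℕ)) hij
  have hOoo : ∑ p ∈ Finset.Ioo i j, (a p : ℕ) = ∑ p ∈ Finset.Ioo i j, (y p : ℕ) :=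
    Finset.sum_congr rfl fun p hp => by
      have hmem := Finset.mem_Ioo.mp hp
      exact congrArg Fin.val (hmid p hmem.1 hmem.2)
  have key2 : (a j : ℕ) + ∑ p ∈ Finset.Ioi j, (a p : ℕ)
      = (y j : ℕ) + ∑ p ∈ Finset.Ioi j, (y p : ℕ) := by omega
  have hjne' : (a j : ℕ) ≠ (y j : ℕ) := fun h => hjne (Fin.ext h)
  rcases lt_or_gt_of_ne hjne' with hc1 | hc2
  · -- a j < y j : increment at j, decrement some l > j with a l > 0
    have hex : ∃ l ∈ Finset.Ioi j, (a l : ℕ) ≠ 0 := by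
      by_contra hc
      push_neg at hc
      have hz : ∑ p ∈ Finset.Ioi j, (a p : ℕ) = 0 := Finset.sum_eq_zero hc
      omega
    obtain ⟨l, hlm, hl0⟩ := hex
    have hjl : j < l := Finset.mem_Ioi.mp hlm
    have hp : (a j : ℕ) + 1 < d j := by have := (y j).isLt; omega
    obtain ⟨f, hdf, hagree, hfp⟩ := exchange_aux a hjl hp (Nat.pos_of_ne_zero hl0)
    have hdegf : deg f = v - 1 := by rw [hdf, hadeg]
    have hlt1 : toLex a < toLex f :=
      ⟨j, fun q hq => (hagree q hq).symm, Fin.lt_def.mpr (show (a j : ℕ) < (f j : ℕ) by omega)⟩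
    have hfi : (f i : ℕ) = (a i : ℕ) := congrArg Fin.val (hagree i hij)
    have hlt2 : toLex f < toLex y :=
      ⟨i, fun q hq => (hagree q (hq.trans hij)).trans (hpre q hq),
        Fin.lt_def.mpr (show (f i : ℕ) < (y i : ℕ) by omega)⟩
    exact lex_contra_aux hlt1 (hamax f hdegf hlt2.le)
  · -- a j > y j : decrement y at some l > j with y l > 0
    have hex : ∃ l ∈ Finset.Ioi j, (y l : ℕ) ≠ 0 := by
      by_contra hc
      push_neg at hc
      have hz : ∑ p ∈ Finset.Ioi j, (y p : ℕ) = 0 := Finset.sum_eq_zero hc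
      omega
    obtain ⟨l, hlm, hl0⟩ := hex
    have hjl : j < l := Finset.mem_Ioi.mp hlm
    have hil : i < l := hij.trans hjl
    obtain ⟨f, hdf, hagree, hfl⟩ := decr_aux y (Nat.pos_of_ne_zero hl0)
    have hdegf : deg f = v - 1 := by omega
    have hlt2 : toLex f < toLex y :=
      ⟨l, fun q hq => hagree q hq, Fin.lt_def.mpr (show (f l : ℕ) < (y l : ℕ) by omega)⟩
    have hfi : (f i : ℕ) = (y i : ℕ) := congrArg Fin.val (hagree i hil)
    have hlt1 : toLex a < toLex f :=
      ⟨i, fun q hq => (hpre q hq).trans (hagree q (hq.trans hil)).symm,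
        Fin.lt_def.mpr (show (a i : ℕ) < (f i : ℕ) by omega)⟩
    exact lex_contra_aux hlt1 (hamax f hdegf hlt2.le)
end
end

section
/- Let $d_1 \le \dots \le d_m$ be positive integers, $F = \{0,\dots,d_1-1\} \times \cdots \times \{0,\dots,d_m-1\}$, $k = \sum_{i=1}^m(d_i-1)$, and $d \le k$. Let $F_{\le d} = \{a \in F : \deg(a) \le d\}$, and let $a_1 >_{lex} a_2 >_{lex} \cdots >_{lex} a_r$ be the first $r$ elements of $F_{\le d}$ in descending lexicographic order. Then the shadow $\Delta(a_1,\dots,a_r) := \{a \in F : a_i \le_P a \text{ for some } i\}$ equals $\{a \in F : a_r \le_{lex} a\}$. -/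
open Finset
open scoped Classical

noncomputable section

/-- If `A` consists of the first `r` elements of `F_{≤ δ}` in descending lexicographic order,
and `aᵣ` is its lexicographically smallest element, then the shadow of `A`
equals `{a ∈ F : aᵣ ≤_lex a}`. -/
theorem stmt4 {m : ℕ} (d : Fin m → ℕ) (hd : ∀ i, 0 < d i) (hmono : Monotone d)
    (δ r : ℕ) (hδ : δ ≤ ∑ i, (d i - 1))
    (A : Finset ((i : Fin m) → Fin (d i)))
    (hA1 : ∀ x ∈ A, deg x ≤ δ) (hA2 : A.card = r)
    (hA3 : ∀ x ∈ A, ∀ y : (i : Fin m) → Fin (d i),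
      deg y ≤ δ → y ∉ A → toLex y < toLex x)
    (ar : (i : Fin m) → Fin (d i)) (har : ar ∈ A)
    (hmin : ∀ x ∈ A, toLex ar ≤ toLex x) :
    shadow A = Finset.univ.filter
      (fun a : (i : Fin m) → Fin (d i) => toLex ar ≤ toLex a) := by
  ext a
  simp only [_root_.shadow, Finset.mem_filter, Finset.mem_univ, true_and]
  constructor
  · rintro ⟨b, hb, hba⟩
    have hmonoLex := @Pi.toLex_monotone (Fin m) (fun i => Fin (d i)) _
      inferInstance (inferInstanceAs (WellFoundedLT (Fin m)))
    exact le_trans (hmin b hb) (hmonoLex hba)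
  · intro ha
    rcases eq_or_lt_of_le ha with heq | hlt
    · refine ⟨ar, har, ?_⟩
      have : ar = a := toLex.injective heq
      exact le_of_eq this
    · obtain ⟨i, hpre, hi⟩ : ∃ i, (∀ j, j < i → ar j = a j) ∧ ar i < a i := hlt
      have hii : (ar i : ℕ) + 1 ≤ (a i : ℕ) := Nat.succ_le_of_lt hi
      by_cases htail : ∀ j, i < j → (ar j : ℕ) = 0
      · -- ar ≤ a pointwise
        refine ⟨ar, har, fun j => ?_⟩
        rcases lt_trichotomy j i with h | h | h
        · exact le_of_eq (hpre j h)
        · subst h; exact le_of_lt hi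
        · have := htail j h
          have : (ar j : ℕ) ≤ (a j : ℕ) := by omega
          exact this
      · push_neg at htail
        obtain ⟨j₀, hj₀, hj₀ne⟩ := htail
        have hlt_i : (ar i : ℕ) + 1 < d i := lt_of_le_of_lt hii (a i).isLt
        set b : (j : Fin m) → Fin (d j) := fun j =>
          ⟨if j < i then (a j : ℕ) else if j = i then (ar i : ℕ) + 1 else 0, by
            split_ifs with h1 h2
            · exact (a j).isLt
            · subst h2; exact hlt_i
            · exact hd j⟩ with hbdef
        have hbval : ∀ j, (b j : ℕ) = if j < i then (a j : ℕ) else if j = i then (ar i : ℕ) + 1 else 0 := fun j => rfl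
        -- sum splitting
        have split : ∀ (x : (j : Fin m) → Fin (d j)), deg x =
            (∑ j ∈ Finset.Iio i, (x j : ℕ)) + (x i : ℕ) + ∑ j ∈ Finset.Ioi i, (x j : ℕ) := by
          intro x
          have hu : (Finset.univ : Finset (Fin m)) = Finset.Iio i ∪ Finset.Ici i := by
            ext j; simp [lt_or_ge]
          have hdisj : Disjoint (Finset.Iio i) (Finset.Ici i) := by
            rw [Finset.disjoint_left]
            intro j hj hj2
            simp only [Finset.mem_Iio] at hj
            simp only [Finset.mem_Ici] at hj2
            exact absurd hj2 hj.not_ge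
          rw [deg, hu, Finset.sum_union hdisj, ← Finset.Ioi_insert i,
            Finset.sum_insert (Finset.notMem_Ioi_self), add_assoc]
        have hbA : b ∈ A := by
          by_contra hbA
          have hdegb : deg b ≤ δ := by
            have h1 : deg b = (∑ j ∈ Finset.Iio i, (a j : ℕ)) + ((ar i : ℕ) + 1) := by
              rw [split b]
              have e1 : ∑ j ∈ Finset.Iio i, (b j : ℕ) = ∑ j ∈ Finset.Iio i, (a j : ℕ) := by
                apply Finset.sum_congr rfl
                intro j hj
                rw [hbval j, if_pos (Finset.mem_Iio.mp hj)]
              have e2 : (b i : ℕ) = (ar i : ℕ) + 1 := by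
                rw [hbval i, if_neg (lt_irrefl i), if_pos rfl]
              have e3 : ∑ j ∈ Finset.Ioi i, (b j : ℕ) = 0 := by
                apply Finset.sum_eq_zero
                intro j hj
                have hj' := Finset.mem_Ioi.mp hj
                rw [hbval j, if_neg (asymm hj'), if_neg (ne_of_gt hj')]
              rw [e1, e2, e3, add_zero]
            have h2 : deg ar ≥ (∑ j ∈ Finset.Iio i, (a j : ℕ)) + ((ar i : ℕ) + 1) := by
              rw [split ar]
              have e1 : ∑ j ∈ Finset.Iio i, (ar j : ℕ) = ∑ j ∈ Finset.Iio i, (a j : ℕ) := by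
                apply Finset.sum_congr rfl
                intro j hj
                rw [hpre j (Finset.mem_Iio.mp hj)]
              have e3 : 1 ≤ ∑ j ∈ Finset.Ioi i, (ar j : ℕ) := by
                calc 1 ≤ (ar j₀ : ℕ) := Nat.one_le_iff_ne_zero.mpr hj₀ne
                _ ≤ _ := Finset.single_le_sum (f := fun j => (ar j : ℕ)) (fun _ _ => Nat.zero_le _)
                    (Finset.mem_Ioi.mpr hj₀)
              rw [e1]
              omega
            exact le_trans (le_trans (le_of_eq h1) h2) (hA1 ar har)
          have := hA3 ar har b hdegb hbA
          -- but ar < b lexicographically, contradiction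
          have harb : toLex ar < toLex b := by
            refine ⟨i, fun j hj => ?_, ?_⟩
            · show ar j = b j
              apply Fin.ext
              rw [hbval j, if_pos hj, hpre j hj]
            · show ar i < b i
              rw [Fin.lt_def, hbval i, if_neg (lt_irrefl i), if_pos rfl]
              omega
          exact lt_asymm harb this
        refine ⟨b, hbA, fun j => ?_⟩
        show b j ≤ a j
        rw [Fin.le_def, hbval j]
        split_ifs with h1 h2
        · exact le_rfl
        · subst h2; exact hii
        · exact Nat.zero_le _
end
end

section
/- Let $d_1 \le \dots \le d_m$ be positive integers, $F = \{0,\dots,d_1-1\} \times \cdots \times \{0,\dots,d_m-1\}$, $k = \sum_{i=1}^m(d_i-1)$, and $d \le k$. Let $a_1,\dots,a_r$ be the first $r$ elements of $F_{\le d} = \{a \in F : \deg(a) \le d\}$ in descending lexicographic order, with $a_r = (a_{r,1},\dots,a_{r,m})$. Then $|\Delta(a_1,\dots,a_r)| = d_1\cdots d_m - \sum_{i=1}^m a_{r,i} \prod_{j=i+1}^m d_j$. -/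
open Finset
open scoped Classical

noncomputable section

section Aux
variable {m : ℕ} {d : Fin m → ℕ}

lemma sum_split (i : Fin m) (f : Fin m → ℕ) :
    ∑ j, f j = (∑ j ∈ Finset.Iio i, f j) + f i + ∑ j ∈ Finset.Ioi i, f j := by
  have h1 : (Finset.univ : Finset (Fin m)) = Finset.Iio i ∪ Finset.Ici i := by
    ext j; simp [lt_or_ge]
  have h2 : Finset.Ici i = insert i (Finset.Ioi i) := (Finset.Ioi_insert i).symm
  rw [h1, Finset.sum_union, h2, Finset.sum_insert (by simp), add_assoc]
  · rw [Finset.disjoint_left]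
    intro j hj hj2
    simp only [Finset.mem_Iio] at hj
    simp only [Finset.mem_Ici] at hj2
    exact absurd hj2 (not_le.2 hj)

lemma key_prod (hd : ∀ i, 0 < d i) (s : Finset (Fin m)) :
    (∑ j ∈ s, (d j - 1) * ∏ k ∈ s.filter (fun k => j < k), d k) + 1 = ∏ j ∈ s, d j := by
  induction s using Finset.induction_on_min with
  | empty => simp
  | insert a s ha ih =>
    have has : a ∉ s := fun h => lt_irrefl a (ha a h)
    have hfa : (insert a s).filter (fun k => a < k) = s := by
      ext k; simp only [Finset.mem_filter, Finset.mem_insert]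
      constructor
      · rintro ⟨h | h, hk⟩
        · exact absurd (h ▸ hk) (lt_irrefl a)
        · exact h
      · intro h; exact ⟨Or.inr h, ha k h⟩
    have hfj : ∀ j ∈ s, (insert a s).filter (fun k => j < k) = s.filter (fun k => j < k) := by
      intro j hj; ext k
      simp only [Finset.mem_filter, Finset.mem_insert]
      constructor
      · rintro ⟨h | h, hk⟩
        · exact absurd hk (by subst h; exact not_lt.2 (ha j hj).le)
        · exact ⟨h, hk⟩
      · rintro ⟨h, hk⟩; exact ⟨Or.inr h, hk⟩
    rw [Finset.sum_insert has, Finset.prod_insert has, hfa,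
      Finset.sum_congr rfl (fun j hj => by rw [hfj j hj])]
    have h1 := hd a
    have e1 : d a - 1 + 1 = d a := Nat.sub_add_cancel h1
    rw [add_assoc, ih]
    conv_rhs => rw [← e1]
    rw [add_one_mul]

lemma filter_Ioi_lt {i j : Fin m} (hij : i < j) :
    (Finset.Ioi i).filter (fun k => j < k) = Finset.Ioi j := by
  ext k; simp only [Finset.mem_filter, Finset.mem_Ioi]
  exact ⟨fun h => h.2, fun h => ⟨hij.trans h, h⟩⟩

lemma tail_bound (hd : ∀ i, 0 < d i) (a : (i : Fin m) → Fin (d i)) (i : Fin m) :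
    (∑ j ∈ Finset.Ioi i, (a j : ℕ) * ∏ k ∈ Finset.Ioi j, d k) + 1 ≤ ∏ j ∈ Finset.Ioi i, d j := by
  calc (∑ j ∈ Finset.Ioi i, (a j : ℕ) * ∏ k ∈ Finset.Ioi j, d k) + 1
      ≤ (∑ j ∈ Finset.Ioi i, (d j - 1) * ∏ k ∈ Finset.Ioi j, d k) + 1 := by
        gcongr with j hj
        have := (a j).isLt; omega
    _ = (∑ j ∈ Finset.Ioi i, (d j - 1) * ∏ k ∈ (Finset.Ioi i).filter (fun k => j < k), d k)
          + 1 := by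
        congr 1; refine Finset.sum_congr rfl fun j hj => ?_
        rw [filter_Ioi_lt (Finset.mem_Ioi.1 hj)]
    _ = ∏ j ∈ Finset.Ioi i, d j := key_prod hd _

lemma phi_lt_prod (hd : ∀ i, 0 < d i) (a : (i : Fin m) → Fin (d i)) :
    phi a < ∏ i, d i := by
  have h := key_prod hd (Finset.univ : Finset (Fin m))
  have hIoi : ∀ j : Fin m, (Finset.univ : Finset (Fin m)).filter (fun k => j < k)
      = Finset.Ioi j := by
    intro j; ext k; simp
  rw [Finset.sum_congr rfl (fun j _ => by rw [hIoi j])] at h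
  have hle : phi a + 1 ≤ ∏ i, d i := by
    rw [← h]
    unfold phi
    gcongr with j hj
    have := (a j).isLt; omega
  omega

lemma phi_strictMono (hd : ∀ i, 0 < d i) {a b : (i : Fin m) → Fin (d i)}
    (h : toLex a < toLex b) : phi a < phi b := by
  obtain ⟨i, hagree, hlt⟩ := h
  have hW : 0 < ∏ k ∈ Finset.Ioi i, d k := Finset.prod_pos fun k _ => hd k
  have hlo : ∑ j ∈ Finset.Iio i, (a j : ℕ) * ∏ k ∈ Finset.Ioi j, d k
      = ∑ j ∈ Finset.Iio i, (b j : ℕ) * ∏ k ∈ Finset.Ioi j, d k := by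
    refine Finset.sum_congr rfl fun j hj => ?_
    rw [show a j = b j from hagree j (Finset.mem_Iio.1 hj)]
  have htail := tail_bound hd a i
  have hii : (a i : ℕ) < (b i : ℕ) := hlt
  unfold phi
  rw [sum_split i (fun j => (a j : ℕ) * ∏ k ∈ Finset.Ioi j, d k),
    sum_split i (fun j => (b j : ℕ) * ∏ k ∈ Finset.Ioi j, d k), hlo]
  have hkey : (a i : ℕ) * ∏ k ∈ Finset.Ioi i, d k + ∏ k ∈ Finset.Ioi i, d k
      ≤ (b i : ℕ) * ∏ k ∈ Finset.Ioi i, d k := by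
    have h2 : ((a i : ℕ) + 1) * ∏ k ∈ Finset.Ioi i, d k
        ≤ (b i : ℕ) * ∏ k ∈ Finset.Ioi i, d k := by
      gcongr
      omega
    linarith [h2]
  omega

lemma lex_trichotomy (a b : (i : Fin m) → Fin (d i)) :
    toLex a < toLex b ∨ a = b ∨ toLex b < toLex a := by
  rcases lt_trichotomy (toLex a) (toLex b) with h | h | h
  · exact Or.inl h
  · exact Or.inr (Or.inl (toLex.injective h))
  · exact Or.inr (Or.inr h)

lemma phi_inj (hd : ∀ i, 0 < d i) {a b : (i : Fin m) → Fin (d i)}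
    (h : phi a = phi b) : a = b := by
  rcases lex_trichotomy a b with hl | hl | hl
  · exact absurd h (Nat.ne_of_lt (phi_strictMono hd hl))
  · exact hl
  · exact absurd h.symm (Nat.ne_of_lt (phi_strictMono hd hl))

lemma phi_le_iff (hd : ∀ i, 0 < d i) {a b : (i : Fin m) → Fin (d i)} :
    phi a ≤ phi b ↔ toLex a ≤ toLex b := by
  constructor
  · intro h
    rcases lex_trichotomy a b with hl | rfl | hl
    · exact le_of_lt hl
    · exact le_refl _
    · exact absurd (phi_strictMono hd hl) (not_lt.2 h)
  · intro h
    rcases eq_or_lt_of_le h with h | h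
    · exact le_of_eq (congrArg phi (toLex.injective h))
    · exact (phi_strictMono hd h).le

lemma toLex_mono' {a b : (i : Fin m) → Fin (d i)} (h : b ≤ a) : toLex b ≤ toLex a := by
  rcases lex_trichotomy a b with hl | hl | hl
  · obtain ⟨i, hag, hlt⟩ := hl
    exact absurd (h i) (not_le.2 hlt)
  · exact le_of_eq (congrArg toLex hl.symm)
  · exact le_of_lt hl

end Aux

/-- If `A` consists of the first `r` elements of `F_{≤ δ}` in descending lexicographic order,
with smallest element `aᵣ = (a_{r,1},…,a_{r,m})`, then
`|Δ(A)| = d₁⋯d_m - ∑ a_{r,i} ∏_{j>i} dⱼ`. -/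
theorem stmt5 {m : ℕ} (d : Fin m → ℕ) (hd : ∀ i, 0 < d i) (hmono : Monotone d)
    (δ r : ℕ) (hδ : δ ≤ ∑ i, (d i - 1))
    (A : Finset ((i : Fin m) → Fin (d i)))
    (hA1 : ∀ x ∈ A, deg x ≤ δ) (hA2 : A.card = r)
    (hA3 : ∀ x ∈ A, ∀ y : (i : Fin m) → Fin (d i),
      deg y ≤ δ → y ∉ A → toLex y < toLex x)
    (ar : (i : Fin m) → Fin (d i)) (har : ar ∈ A)
    (hmin : ∀ x ∈ A, toLex ar ≤ toLex x) :
    (shadow A).card = ∏ i, d i - phi ar := by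
  classical
  -- membership characterization of A
  have mem_A : ∀ x : (i : Fin m) → Fin (d i), x ∈ A ↔ deg x ≤ δ ∧ toLex ar ≤ toLex x := by
    intro x
    constructor
    · intro hx; exact ⟨hA1 x hx, hmin x hx⟩
    · rintro ⟨h1, h2⟩
      by_contra hx
      exact (hA3 ar har x h1 hx).not_ge h2
  -- shadow A = { a | phi ar ≤ phi a }
  have hshadow : _root_.shadow A = Finset.univ.filter (fun a => phi ar ≤ phi a) := by
    ext a
    simp only [_root_.shadow, Finset.mem_filter, Finset.mem_univ, true_and]
    constructor
    · rintro ⟨b, hb, hba⟩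
      rw [phi_le_iff hd]
      exact le_trans (hmin b hb) (toLex_mono' hba)
    · intro h
      rw [phi_le_iff hd] at h
      by_cases hdeg : deg a ≤ δ
      · exact ⟨a, (mem_A a).2 ⟨hdeg, h⟩, le_refl a⟩
      · push_neg at hdeg
        have hne : ar ≠ a := by
          rintro rfl
          exact absurd (hA1 ar har) (not_le.2 hdeg)
        have hlt : toLex ar < toLex a :=
          lt_of_le_of_ne h (fun he => hne (toLex.injective he))
        obtain ⟨i, hagree, hia⟩ := hlt
        by_cases h0 : ∀ j, i < j → (ar j : ℕ) = 0
        · -- ar ≤ a coordinatewise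
          refine ⟨ar, har, fun j => ?_⟩
          rcases lt_trichotomy j i with hj | hj | hj
          · exact le_of_eq (hagree j hj)
          · subst hj; exact le_of_lt hia
          · have := h0 j hj
            exact Fin.le_def.2 (by omega)
        · push_neg at h0
          obtain ⟨j0, hj0i, hj0⟩ := h0
          have hii : (ar i : ℕ) < (a i : ℕ) := hia
          have hbd : (ar i : ℕ) + 1 < d i := lt_of_le_of_lt hii (a i).isLt
          set b : (i : Fin m) → Fin (d i) := fun j =>
            if hji : j < i then ar j
            else if hje : j = i then ⟨(ar i : ℕ) + 1, hje ▸ hbd⟩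
            else ⟨0, hd j⟩ with hbdef
          have hb_lt : ∀ j, j < i → (b j : ℕ) = (ar j : ℕ) := by
            intro j hj; simp [hbdef, hj]
          have hb_i : (b i : ℕ) = (ar i : ℕ) + 1 := by
            simp [hbdef]
          have hb_gt : ∀ j, i < j → (b j : ℕ) = 0 := by
            intro j hj
            have h1 : ¬ j < i := not_lt.2 hj.le
            have h2 : j ≠ i := ne_of_gt hj
            simp [hbdef, h1, h2]
          have hba : b ≤ a := by
            intro j
            show (b j : ℕ) ≤ (a j : ℕ)
            rcases lt_trichotomy j i with hj | hj | hj
            · rw [hb_lt j hj]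
              exact le_of_eq (congrArg Fin.val (hagree j hj))
            · rw [hj, hb_i]
              omega
            · rw [hb_gt j hj]
              omega
          have harb : toLex ar ≤ toLex b := by
            refine le_of_lt ⟨i, fun j hj => ?_, ?_⟩
            · exact (Fin.val_injective (hb_lt j hj)).symm
            · show (ar i : ℕ) < (b i : ℕ)
              rw [hb_i]; omega
          have hdegb : deg b ≤ δ := by
            have hsum_ar : deg ar = (∑ j ∈ Finset.Iio i, (ar j : ℕ)) + (ar i : ℕ)
                + ∑ j ∈ Finset.Ioi i, (ar j : ℕ) := sum_split i _
            have hsum_b : deg b = (∑ j ∈ Finset.Iio i, (b j : ℕ)) + (b i : ℕ)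
                + ∑ j ∈ Finset.Ioi i, (b j : ℕ) := sum_split i _
            have h1 : ∑ j ∈ Finset.Iio i, (b j : ℕ) = ∑ j ∈ Finset.Iio i, (ar j : ℕ) :=
              Finset.sum_congr rfl fun j hj => hb_lt j (Finset.mem_Iio.1 hj)
            have h2 : ∑ j ∈ Finset.Ioi i, (b j : ℕ) = 0 :=
              Finset.sum_eq_zero fun j hj => hb_gt j (Finset.mem_Ioi.1 hj)
            have h3 : (ar j0 : ℕ) ≤ ∑ j ∈ Finset.Ioi i, (ar j : ℕ) :=
              Finset.single_le_sum (fun k _ => Nat.zero_le ((ar k : ℕ)))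
                (Finset.mem_Ioi.2 hj0i)
            have h4 : 1 ≤ (ar j0 : ℕ) := Nat.one_le_iff_ne_zero.2 hj0
            have h5 : deg ar ≤ δ := hA1 ar har
            rw [hsum_b, h1, h2, hb_i]
            omega
          exact ⟨b, (mem_A b).2 ⟨hdegb, harb⟩, hba⟩
  -- cardinality computation
  rw [hshadow]
  have hinj : Function.Injective (phi : ((i : Fin m) → Fin (d i)) → ℕ) :=
    fun a b h => phi_inj hd h
  have hcardF : (Finset.univ : Finset ((i : Fin m) → Fin (d i))).card = ∏ i, d i := by
    simp [Fintype.card_pi]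
  have himage : Finset.univ.image (phi : ((i : Fin m) → Fin (d i)) → ℕ)
      = Finset.range (∏ i, d i) := by
    apply Finset.eq_of_subset_of_card_le
    · intro x hx
      simp only [Finset.mem_image] at hx
      obtain ⟨a, _, rfl⟩ := hx
      exact Finset.mem_range.2 (phi_lt_prod hd a)
    · rw [Finset.card_range, Finset.card_image_of_injective _ hinj, hcardF]
  have hset : ((Finset.univ : Finset ((i : Fin m) → Fin (d i))).filter
      (fun a => phi ar ≤ phi a)).image phi
      = (Finset.range (∏ i, d i)).filter (fun x => phi ar ≤ x) := by
    ext x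
    simp only [Finset.mem_image, Finset.mem_filter, Finset.mem_univ, true_and,
      Finset.mem_range]
    constructor
    · rintro ⟨a, ha, rfl⟩
      exact ⟨phi_lt_prod hd a, ha⟩
    · rintro ⟨hx, hle⟩
      have hmem : x ∈ Finset.univ.image (phi : ((i : Fin m) → Fin (d i)) → ℕ) := by
        rw [himage]; exact Finset.mem_range.2 hx
      obtain ⟨a, -, rfl⟩ := Finset.mem_image.1 hmem
      exact ⟨a, hle, rfl⟩
  have hcard : ((Finset.univ : Finset ((i : Fin m) → Fin (d i))).filter
      (fun a => phi ar ≤ phi a)).card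
      = ((Finset.range (∏ i, d i)).filter (fun x => phi ar ≤ x)).card := by
    rw [← hset, Finset.card_image_of_injective _ hinj]
  rw [hcard]
  have hIco : (Finset.range (∏ i, d i)).filter (fun x => phi ar ≤ x)
      = Finset.Ico (phi ar) (∏ i, d i) := by
    ext x
    simp only [Finset.mem_filter, Finset.mem_range, Finset.mem_Ico]
    exact ⟨fun h => ⟨h.2, h.1⟩, fun h => ⟨h.2, h.1⟩⟩
  rw [hIco, Nat.card_Ico]
end
end

section
/- Let $d_1 \le \dots \le d_m$ be positive integers, $F = \{0,\dots,d_1-1\} \times \cdots \times \{0,\dots,d_m-1\}$, $k = \sum_i(d_i-1)$, $1 \le u \le v \le k$. Let $M(r)$ be the first $r$ elements of $F_{\le v}$ in descending lexicographic order, $M_u := M(r) \cap F_u$, and $r_u := |M_u|$. Let $M_u^*$ be the first $r_u + 1$ elements of $F_u$ in descending lexicographic order. Then $\Delta_v(M_u) \subseteq M_v \subseteq \Delta_v(M_u^*)$. -/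
open Finset
open scoped Classical

noncomputable section

/-- Greedy truncation: value at `l` of the lex-largest degree-`u` point below `f`. -/
def gg (u : ℕ) (f : ℕ → ℕ) (l : ℕ) : ℕ :=
  min (f l) (u - min u (∑ j ∈ Finset.range l, f j))

lemma gg_le (u : ℕ) (f : ℕ → ℕ) (l : ℕ) : gg u f l ≤ f l := min_le_left _ _

lemma gg_sum (u : ℕ) (f : ℕ → ℕ) (n : ℕ) :
    ∑ l ∈ Finset.range n, gg u f l = min u (∑ l ∈ Finset.range n, f l) := by
  induction n with
  | zero => simp
  | succ n ih =>
    rw [Finset.sum_range_succ, Finset.sum_range_succ, ih, gg]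
    omega

lemma gg_eq_of_lt (u : ℕ) (f : ℕ → ℕ) (l : ℕ) (h : gg u f l < f l) :
    min u (∑ j ∈ Finset.range l, f j) + gg u f l = u := by
  unfold gg at *
  omega

lemma gg_exhaust (u : ℕ) (f : ℕ → ℕ) (j l : ℕ) (hjl : j < l) (h : gg u f j < f j) :
    min u (∑ i ∈ Finset.range l, f i) = u := by
  have h1 := gg_eq_of_lt u f j h
  have h2 := gg_sum u f (j + 1)
  rw [Finset.sum_range_succ, gg_sum] at h2
  have hA : ∑ i ∈ Finset.range (j + 1), f i ≤ ∑ i ∈ Finset.range l, f i :=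
    Finset.sum_le_sum_of_subset (Finset.range_subset_range.2 hjl)
  omega

lemma sum_Iio_val {m : ℕ} (h : ℕ → ℕ) (i : Fin m) :
    ∑ j ∈ Finset.Iio i, h (j : ℕ) = ∑ l ∈ Finset.range (i : ℕ), h l := by
  rw [← Nat.Iio_eq_range, ← Fin.map_valEmbedding_Iio, Finset.sum_map]
  rfl

/-- Let `M` be the first `r` elements of `F_{≤ v}` in descending lexicographic order,
`M_u = M ∩ F_u`, `M_v = M ∩ F_v`, and let `M_u^*` be the first `|M_u| + 1` elements of `F_u`
in descending lexicographic order. Then `Δ_v(M_u) ⊆ M_v ⊆ Δ_v(M_u^*)`. -/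
theorem stmt9 {m : ℕ} (d : Fin m → ℕ) (hd : ∀ i, 0 < d i) (hmono : Monotone d)
    (u v r : ℕ) (hu : 1 ≤ u) (huv : u ≤ v) (hv : v ≤ ∑ i, (d i - 1))
    (M : Finset ((i : Fin m) → Fin (d i)))
    (hM1 : ∀ x ∈ M, deg x ≤ v) (hM2 : M.card = r)
    (hM3 : ∀ x ∈ M, ∀ y : (i : Fin m) → Fin (d i),
      deg y ≤ v → y ∉ M → toLex y < toLex x)
    (Mstar : Finset ((i : Fin m) → Fin (d i)))
    (hMs1 : ∀ x ∈ Mstar, deg x = u)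
    (hMs2 : Mstar.card = (M.filter (fun x => deg x = u)).card + 1)
    (hMs3 : ∀ x ∈ Mstar, ∀ y : (i : Fin m) → Fin (d i),
      deg y = u → y ∉ Mstar → toLex y < toLex x) :
    shadowAt v (M.filter (fun x => deg x = u)) ⊆ M.filter (fun x => deg x = v) ∧
    M.filter (fun x => deg x = v) ⊆ shadowAt v Mstar := by
  constructor
  · -- Δ_v(M_u) ⊆ M_v
    intro a ha
    simp only [shadowAt, _root_.shadow, mem_filter, mem_univ, true_and] at ha
    obtain ⟨⟨b, hb, hba⟩, hdeg⟩ := ha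
    simp only [mem_filter]
    refine ⟨?_, hdeg⟩
    by_contra haM
    have hwf : WellFoundedLT (Fin m) := inferInstance
    have h1 : toLex b ≤ toLex a := Pi.toLex_monotone hba
    have h2 : toLex a < toLex b := hM3 b hb.1 a (le_of_eq hdeg) haM
    exact absurd h1 (not_le.mpr h2)
  · -- M_v ⊆ Δ_v(M_u^*)
    intro a ha
    rw [mem_filter] at ha
    obtain ⟨haM, hdeg⟩ := ha
    -- the extension of `a` to `ℕ → ℕ`
    set f : ℕ → ℕ := fun l => if h : l < m then ((a ⟨l, h⟩ : ℕ)) else 0 with hf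
    have hfv : ∀ i : Fin m, f (i : ℕ) = (a i : ℕ) := by
      intro i; simp [hf, i.isLt]
    have hfa : ∑ l ∈ Finset.range m, f l = deg a := by
      rw [← Fin.sum_univ_eq_sum_range]
      exact Finset.sum_congr rfl fun i _ => hfv i
    have hg_le : ∀ i : Fin m, gg u f (i : ℕ) ≤ (a i : ℕ) := by
      intro i; rw [← hfv i]; exact gg_le u f _
    -- the greedy point b below a of degree u
    set b : (i : Fin m) → Fin (d i) :=
      fun i => ⟨gg u f (i : ℕ), lt_of_le_of_lt (hg_le i) (a i).isLt⟩ with hbdef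
    have hbval : ∀ i : Fin m, (b i : ℕ) = gg u f (i : ℕ) := fun i => rfl
    have hble : b ≤ a := fun i => by
      change (b i) ≤ a i
      rw [Fin.le_def]; exact hg_le i
    have hdegb : deg b = u := by
      have h1 : deg b = ∑ l ∈ Finset.range m, gg u f l := by
        rw [deg, ← Fin.sum_univ_eq_sum_range]
      rw [h1, gg_sum, hfa, hdeg]
      omega
    -- key dichotomy: any degree-u point lex-above b is lex-above a
    have hdich : ∀ c : (i : Fin m) → Fin (d i), deg c = u →
        toLex b < toLex c → toLex a < toLex c := by
      intro c hcdeg hlt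
      obtain ⟨i, hpre, hlti⟩ := hlt
      have hlti' : (b i : ℕ) < (c i : ℕ) := hlti
      have hpre' : ∀ j : Fin m, j < i → b j = c j := fun j hj => hpre j hj
      -- sum of c over Iio i
      have hcIio : ∑ j ∈ Finset.Iio i, (c j : ℕ) =
          min u (∑ l ∈ Finset.range (i : ℕ), f l) := by
        have h1 : ∑ j ∈ Finset.Iio i, (c j : ℕ) = ∑ j ∈ Finset.Iio i, gg u f (j : ℕ) := by
          refine Finset.sum_congr rfl fun j hj => ?_
          rw [Finset.mem_Iio] at hj
          rw [← hpre' j hj]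
        rw [h1, sum_Iio_val, gg_sum]
      -- deg c ≥ sum over Iic i
      have hIic : (∑ j ∈ Finset.Iio i, (c j : ℕ)) + (c i : ℕ) ≤ deg c := by
        have he : Finset.Iic i = insert i (Finset.Iio i) := (Finset.Iio_insert i).symm
        have h2 : ∑ j ∈ Finset.Iic i, (c j : ℕ) ≤ deg c :=
          Finset.sum_le_sum_of_subset (Finset.subset_univ _)
        rwa [he, Finset.sum_insert (by simp), add_comm] at h2
      by_cases hgi : gg u f (i : ℕ) < f (i : ℕ)
      · -- budget was the binding constraint at i : impossible
        exfalso
        have hgeq := gg_eq_of_lt u f (i : ℕ) hgi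
        rw [hcdeg, hcIio] at hIic
        rw [hbval] at hlti'
        omega
      · -- gg u f i = a i
        have hgieq : gg u f (i : ℕ) = (a i : ℕ) := by
          have h3 := hg_le i
          rw [← hfv i] at h3 ⊢
          omega
        by_cases hex : ∃ j : Fin m, j < i ∧ gg u f (j : ℕ) < f (j : ℕ)
        · -- budget already exhausted before i : impossible
          exfalso
          obtain ⟨j, hji, hgj⟩ := hex
          have hji' : (j : ℕ) < (i : ℕ) := hji
          have hmin := gg_exhaust u f (j : ℕ) (i : ℕ) hji' hgj
          have hcipos : 0 < (c i : ℕ) := lt_of_le_of_lt (Nat.zero_le _) hlti'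
          rw [hcdeg, hcIio] at hIic
          omega
        · -- a and c agree strictly below i and a i < c i : toLex a < toLex c
          push_neg at hex
          refine ⟨i, fun j hj => ?_, ?_⟩
          · have h1 : gg u f (j : ℕ) = f (j : ℕ) :=
              le_antisymm (gg_le u f _) (hex j hj)
            have h2 : (a j : ℕ) = (c j : ℕ) := by
              rw [← hfv j, ← h1, ← hbval j, hpre' j hj]
            exact Fin.ext h2
          · show a i < c i
            rw [Fin.lt_def, ← hgieq]
            exact hlti'
    -- b ∈ Mstar
    have hbMs : b ∈ Mstar := by
      by_contra hbM
      have hsub : Mstar ⊆ M.filter (fun x => deg x = u) := by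
        intro x hx
        have hxu := hMs1 x hx
        have hax := hdich x hxu (hMs3 x hx b hdegb hbM)
        rw [mem_filter]
        refine ⟨?_, hxu⟩
        by_contra hxM
        exact absurd hax (not_lt_of_gt (hM3 a haM x (hxu ▸ huv) hxM))
      have := Finset.card_le_card hsub
      omega
    -- conclude
    simp only [shadowAt, _root_.shadow, mem_filter, mem_univ, true_and]
    exact ⟨⟨b, hbMs, hble⟩, hdeg⟩
end
end

section
/- Let $d_1 \le \dots \le d_m$ be positive integers, $F = \{0,\dots,d_1-1\} \times \cdots \times \{0,\dots,d_m-1\}$, $k = \sum_i(d_i-1)$, $r \ge 1$ and $v \le k$. Let $M(r)$ be the first $r$ elements of $F_{\le v}$ in descending lexicographic order and $M_v = M(r) \cap F_v$. Then $|\Delta(M(r))| = r - |M_v| + |\Delta(M_v)|$. -/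
open Finset
open scoped Classical

noncomputable section

lemma deg_mono' {m : ℕ} {d : Fin m → ℕ} {a b : (i : Fin m) → Fin (d i)} (h : b ≤ a) :
    deg b ≤ deg a :=
  Finset.sum_le_sum fun i _ => h i

lemma mid_lemma {m : ℕ} {d : Fin m → ℕ} (v : ℕ) :
    ∀ n (a b : (i : Fin m) → Fin (d i)), deg a ≤ n → b ≤ a → deg b ≤ v → v ≤ deg a →
      ∃ c, b ≤ c ∧ c ≤ a ∧ deg c = v := by
  intro n
  induction n with
  | zero =>
    intro a b hn hba h1 h2
    exact ⟨a, hba, le_rfl, by omega⟩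
  | succ n ih =>
    intro a b hn hba h1 h2
    by_cases hav : deg a = v
    · exact ⟨a, hba, le_rfl, hav⟩
    · have hlt : v < deg a := lt_of_le_of_ne h2 (Ne.symm hav)
      have hblt : deg b < deg a := lt_of_le_of_lt h1 hlt
      have hex : ∃ i, (b i : ℕ) < a i := by
        by_contra hc
        push_neg at hc
        exact absurd (Finset.sum_le_sum fun i _ => hc i) (not_le.mpr hblt)
      obtain ⟨i, hi⟩ := hex
      have hai : 0 < (a i : ℕ) := lt_of_le_of_lt (Nat.zero_le _) hi
      set a' : (j : Fin m) → Fin (d j) :=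
        Function.update a i ⟨(a i : ℕ) - 1, lt_trans (Nat.sub_lt hai one_pos) (a i).isLt⟩ with ha'
      have ha'le : a' ≤ a := by
        intro j
        by_cases hj : j = i
        · subst hj; simp only [ha', Function.update_self, Fin.le_def, Fin.val_mk]; omega
        · simp [ha', Function.update_of_ne hj]
      have hba' : b ≤ a' := by
        intro j
        by_cases hj : j = i
        · subst hj
          simp only [ha', Function.update_self, Fin.le_def, Fin.val_mk]
          omega
        · simp only [ha', Function.update_of_ne hj]; exact hba j
      have hdeg : deg a' + 1 = deg a := by
        have h1' : deg a' = ((a i : ℕ) - 1) + ∑ j ∈ Finset.univ.erase i, (a j : ℕ) := by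
          simp only [deg, ha']
          rw [← Finset.add_sum_erase _ _ (Finset.mem_univ i)]
          congr 1
          · simp
          · exact Finset.sum_congr rfl fun j hj => by
              rw [Function.update_of_ne (Finset.ne_of_mem_erase hj)]
        have h2' : deg a = (a i : ℕ) + ∑ j ∈ Finset.univ.erase i, (a j : ℕ) :=
          (Finset.add_sum_erase _ _ (Finset.mem_univ i)).symm
        omega
      have := ih a' b (by omega) hba' h1 (by omega)
      obtain ⟨c, h1c, h2c, h3c⟩ := this
      exact ⟨c, h1c, le_trans h2c ha'le, h3c⟩

/-- Let `M` be the first `r` elements of `F_{≤ v}` in descending lexicographic order and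
`M_v = M ∩ F_v`. Then `|Δ(M)| = r - |M_v| + |Δ(M_v)|`. -/
theorem stmt10 {m : ℕ} (d : Fin m → ℕ) (hd : ∀ i, 0 < d i) (hmono : Monotone d)
    (v r : ℕ) (hr : 1 ≤ r) (hv : v ≤ ∑ i, (d i - 1))
    (M : Finset ((i : Fin m) → Fin (d i)))
    (hM1 : ∀ x ∈ M, deg x ≤ v) (hM2 : M.card = r)
    (hM3 : ∀ x ∈ M, ∀ y : (i : Fin m) → Fin (d i),
      deg y ≤ v → y ∉ M → toLex y < toLex x) :
    (shadow M).card =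
      r - (M.filter (fun x => deg x = v)).card +
        (shadow (M.filter (fun x => deg x = v))).card := by
  set Mv := M.filter (fun x => deg x = v) with hMv
  have lex_aux : ∀ x y : (i : Fin m) → Fin (d i), x ≤ y → ¬ toLex y < toLex x := by
    intro x y hxy hlt
    have hlt' : Pi.Lex (· < ·) (fun {i} => ((· < ·) : Fin (d i) → Fin (d i) → Prop)) y x := hlt
    obtain ⟨i, -, hi⟩ := hlt'
    exact absurd (hxy i) (not_le_of_gt hi)
  have hunion : _root_.shadow M = M ∪ _root_.shadow Mv := by
    ext a
    simp only [_root_.shadow, Finset.mem_filter, Finset.mem_univ, true_and,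
      Finset.mem_union, hMv]
    constructor
    · rintro ⟨b, hb, hba⟩
      by_cases haM : a ∈ M
      · exact Or.inl haM
      · by_cases hdeg : deg a ≤ v
        · exact absurd (hM3 b hb a hdeg haM) (lex_aux b a hba)
        · obtain ⟨c, hbc, hca, hc⟩ := mid_lemma v (deg a) a b le_rfl hba (hM1 b hb)
            (le_of_not_ge hdeg)
          have hcM : c ∈ M := by
            by_contra hcM
            exact absurd (hM3 b hb c hc.le hcM) (lex_aux b c hbc)
          exact Or.inr ⟨c, ⟨hcM, hc⟩, hca⟩
    · rintro (haM | ⟨b, ⟨hbM, hbv⟩, hba⟩)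
      · exact ⟨a, haM, le_rfl⟩
      · exact ⟨b, hbM, hba⟩
  have hinter : M ∩ _root_.shadow Mv = Mv := by
    ext x
    simp only [Finset.mem_inter, _root_.shadow, Finset.mem_filter, Finset.mem_univ,
      true_and, hMv]
    constructor
    · rintro ⟨hxM, b, ⟨hbM, hbv⟩, hbx⟩
      exact ⟨hxM, le_antisymm (hM1 x hxM) (hbv ▸ deg_mono' hbx)⟩
    · rintro ⟨hxM, hxv⟩
      exact ⟨hxM, x, ⟨hxM, hxv⟩, le_rfl⟩
  have hcard := Finset.card_union_add_card_inter M (_root_.shadow Mv)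
  rw [hinter, hM2] at hcard
  have hMvle : Mv.card ≤ r := hM2 ▸ Finset.card_filter_le M _
  rw [hunion]
  omega
end
end

section
/- Let $\mathbb{F}$ be a field, $A_i = \{\gamma_{i,1},\dots,\gamma_{i,d_i}\} \subseteq \mathbb{F}$ with $d_1 \le \dots \le d_m$, $\mathcal{A} = A_1 \times \cdots \times A_m$, $k = \sum_i(d_i-1)$ and $d \le k$. Let $a_1,\dots,a_r$ be the first $r$ elements of $F_{\le d}$ in descending lexicographic order, with $a_r = (a_{r,1},\dots,a_{r,m})$, and for each $a_\ell$ define $f_{a_\ell} = \prod_{s=1}^m \prod_{t=1}^{(a_\ell)_s}(x_s - \gamma_{s,t})$. Then the number of common zeros in $\mathcal{A}$ of $f_{a_1},\dots,f_{a_r}$ equals $\sum_{i=1}^m a_{r,i} \prod_{j=i+1}^m d_j$. -/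
open Finset
open scoped Classical

noncomputable section

/-- The polynomial `f_b = ∏_s ∏_{t=1}^{b_s} (x_s - γ_{s,t})` attached to a tuple `b ∈ F`. -/
def fpoly {𝔽 : Type*} [Field 𝔽] {m : ℕ} {d : Fin m → ℕ}
    (γ : (i : Fin m) → Fin (d i) → 𝔽) (b : (i : Fin m) → Fin (d i)) :
    MvPolynomial (Fin m) 𝔽 :=
  ∏ s : Fin m, ∏ t ∈ Finset.univ.filter (fun t : Fin (d s) => (t : ℕ) < (b s : ℕ)),
    (MvPolynomial.X s - MvPolynomial.C (γ s t))

section Aux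
variable {m : ℕ} {d : Fin m → ℕ}

lemma lexlt_iff (x y : (i : Fin m) → Fin (d i)) :
    toLex x < toLex y ↔ ∃ i, (∀ j, j < i → x j = y j) ∧ x i < y i := Iff.rfl

lemma lexmono {x y : (i : Fin m) → Fin (d i)} (h : x ≤ y) : toLex x ≤ toLex y := by
  haveI : WellFoundedLT (Fin m) := inferInstance
  exact Pi.toLex_monotone h

lemma sumIic (i : Fin m) (f : ℕ → ℕ) :
    ∑ j ∈ Iic i, f j.1 = ∑ j ∈ range (i.1+1), f j := by
  have h1 : Finset.range (i.1+1) = Finset.Iic (i.1) := by ext; simp [Nat.lt_succ_iff]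
  rw [h1, ← Fin.map_valEmbedding_Iic, Finset.sum_map]
  rfl

lemma sumIio (i : Fin m) (f : ℕ → ℕ) :
    ∑ j ∈ Iio i, f j.1 = ∑ j ∈ range i.1, f j := by
  rw [← Nat.Iio_eq_range, ← Fin.map_valEmbedding_Iio, Finset.sum_map]
  rfl

lemma prod_piece (i : Fin m) (u : ℕ) (f : Fin m → ℕ) :
    ∏ j, (if j < i then 1 else if i < j then f j else u) = u * ∏ j ∈ Finset.Ioi i, f j := by
  have h1 : ∏ j, (if j < i then 1 else if i < j then f j else u)
      = ∏ j ∈ Finset.Ici i, (if j < i then 1 else if i < j then f j else u) := by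
    refine (Finset.prod_subset (Finset.subset_univ _) ?_).symm
    intro x _ hx
    simp only [Finset.mem_Ici, not_le] at hx
    simp [hx]
  rw [h1, ← Finset.Ioi_insert i, Finset.prod_insert Finset.notMem_Ioi_self]
  congr 1
  · simp
  · refine Finset.prod_congr rfl fun j hj => ?_
    simp only [Finset.mem_Ioi] at hj
    simp [hj, not_lt_of_gt hj]

lemma card_slice (a : (i : Fin m) → Fin (d i)) (i : Fin m) :
    (univ.filter (fun y : (i : Fin m) → Fin (d i) =>
        (∀ j, j < i → y j = a j) ∧ y i < a i)).card
      = (a i : ℕ) * ∏ j ∈ Finset.Ioi i, d j := by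
  set t : (j : Fin m) → Finset (Fin (d j)) := fun j =>
    if j < i then {a j} else if i < j then univ
      else univ.filter (fun u => (u : ℕ) < (a i : ℕ)) with ht
  have hmem : (univ.filter (fun y : (i : Fin m) → Fin (d i) =>
      (∀ j, j < i → y j = a j) ∧ y i < a i)) = Fintype.piFinset t := by
    ext y
    simp only [mem_filter, mem_univ, true_and, Fintype.mem_piFinset]
    constructor
    · rintro ⟨h1, h2⟩ j
      rcases lt_trichotomy j i with hj | hj | hj
      · simp [ht, hj, h1 j hj]
      · subst hj
        simp [ht, h2]
      · simp [ht, hj, not_lt_of_gt hj]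
    · intro h
      constructor
      · intro j hj
        have := h j
        simpa [ht, hj] using this
      · have := h i
        simp only [ht, lt_irrefl, if_neg (lt_irrefl i), if_false, mem_filter, mem_univ,
          true_and] at this
        exact Fin.lt_def.mpr this
  rw [hmem, Fintype.card_piFinset]
  have hc : ∀ j, (t j).card = if j < i then 1 else if i < j then d j else (a i : ℕ) := by
    intro j
    rcases lt_trichotomy j i with hj | hj | hj
    · simp [ht, hj]
    · subst hj
      have hIio : (univ.filter (fun u : Fin (d j) => (u : ℕ) < ((a j) : ℕ))) = Finset.Iio (a j) := by
        ext u
        simp only [mem_filter, mem_univ, true_and, mem_Iio, Fin.lt_def]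
      simp only [ht, lt_irrefl, if_neg (lt_irrefl j), if_false, hIio, Fin.card_Iio]
    · simp [ht, hj, not_lt_of_gt hj]
  simp only [hc]
  exact prod_piece i _ _

lemma card_lexlt (a : (i : Fin m) → Fin (d i)) :
    (univ.filter (fun y : (i : Fin m) → Fin (d i) => toLex y < toLex a)).card = phi a := by
  classical
  set S : Fin m → Finset ((i : Fin m) → Fin (d i)) := fun i =>
    univ.filter (fun y => (∀ j, j < i → y j = a j) ∧ y i < a i) with hS
  have hunion : (univ.filter (fun y : (i : Fin m) → Fin (d i) => toLex y < toLex a))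
      = univ.biUnion S := by
    ext y
    simp only [mem_filter, mem_univ, true_and, mem_biUnion, hS]
    rw [lexlt_iff]
  rw [hunion, Finset.card_biUnion, phi]
  · exact Finset.sum_congr rfl (fun i _ => card_slice a i)
  · intro i _ i' _ hne
    rw [Function.onFun, Finset.disjoint_left]
    intro y hy hy'
    simp only [hS, mem_filter, mem_univ, true_and] at hy hy'
    rcases hne.lt_or_gt with h | h
    · exact absurd (hy'.1 i h) (ne_of_lt hy.2)
    · exact absurd (hy.1 i' h) (ne_of_lt hy'.2)

end Aux
lemma greedy {m : ℕ} {d : Fin m → ℕ} (δ : ℕ) (y : (i : Fin m) → Fin (d i)) :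
    ∃ b : (i : Fin m) → Fin (d i), (∀ i, (b i : ℕ) ≤ (y i : ℕ)) ∧ deg b ≤ δ ∧
      ∀ c : (i : Fin m) → Fin (d i), deg c ≤ δ → toLex c ≤ toLex y → toLex c ≤ toLex b := by
  classical
  set Y : ℕ → ℕ := fun j => if h : j < m then (y ⟨j, h⟩ : ℕ) else 0 with hY
  set T : ℕ → ℕ := fun n => ∑ j ∈ range n, Y j with hT
  set bN : ℕ → ℕ := fun j => min δ (T (j+1)) - min δ (T j) with hbN
  have hTsucc : ∀ n, T (n+1) = T n + Y n := fun n => Finset.sum_range_succ Y n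
  have hbNdef : ∀ j, bN j = min δ (T (j+1)) - min δ (T j) := fun j => rfl
  have hbN_le : ∀ j, bN j ≤ Y j := by
    intro j
    have h1 := hTsucc j
    have h2 := hbNdef j
    omega
  have hYi : ∀ i : Fin m, Y i.1 = (y i : ℕ) := by
    intro i
    simp [hY, i.isLt]
  have hsum : ∀ n, ∑ j ∈ range n, bN j = min δ (T n) := by
    intro n
    induction n with
    | zero => simp [hT]
    | succ n ih =>
      rw [Finset.sum_range_succ, ih]
      have h1 := hTsucc n
      have h2 := hbNdef n
      omega
  have hlt : ∀ i : Fin m, bN i.1 < d i := by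
    intro i
    have := hbN_le i.1
    rw [hYi i] at this
    exact lt_of_le_of_lt this (y i).isLt
  set b : (i : Fin m) → Fin (d i) := fun i => ⟨bN i.1, hlt i⟩ with hb
  have hble : ∀ i, (b i : ℕ) ≤ (y i : ℕ) := by
    intro i
    have := hbN_le i.1
    rw [hYi i] at this
    exact this
  have hIicb : ∀ j : Fin m, ∑ k ∈ Iic j, (b k : ℕ) = min δ (T (j.1+1)) := by
    intro j
    have h1 : ∑ k ∈ Iic j, (b k : ℕ) = ∑ k ∈ range (j.1+1), bN k := sumIic j bN
    rw [h1, hsum]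
  have hdegb : deg b ≤ δ := by
    have h1 : deg b = ∑ i ∈ range m, bN i := by
      have : deg b = ∑ i : Fin m, bN i.1 := rfl
      rw [this, Fin.sum_univ_eq_sum_range bN m]
    rw [h1, hsum]
    exact min_le_left _ _
  have claim : ∀ j : Fin m, (b j : ℕ) < (y j : ℕ) → ∑ k ∈ Iic j, (b k : ℕ) = δ := by
    intro j hj
    rw [hIicb j]
    have h1 := hTsucc j.1
    have h2 := hbNdef j.1
    have h3 := hYi j
    have h4 : (b j : ℕ) = bN j.1 := rfl
    omega
  refine ⟨b, hble, hdegb, ?_⟩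
  intro c hcdeg hcy
  haveI : WellFoundedLT (Fin m) := inferInstance
  by_contra hcon
  rw [not_le] at hcon
  obtain ⟨i, hagree, hbc⟩ := (lexlt_iff b c).mp hcon
  have hbc' : (b i : ℕ) < (c i : ℕ) := hbc
  by_cases hby : (b i : ℕ) < (y i : ℕ)
  · have hIic := claim i hby
    have h1 : ∑ k ∈ Iic i, (c k : ℕ) ≤ deg c := by
      exact Finset.sum_le_sum_of_subset (Finset.subset_univ _)
    have h2 : ∑ k ∈ Iic i, (c k : ℕ) = ∑ k ∈ Iio i, (c k : ℕ) + (c i : ℕ) := by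
      rw [← Finset.Iio_insert i, Finset.sum_insert (Finset.notMem_Iio_self), add_comm]
    have h3 : ∑ k ∈ Iic i, (b k : ℕ) = ∑ k ∈ Iio i, (b k : ℕ) + (b i : ℕ) := by
      rw [← Finset.Iio_insert i, Finset.sum_insert (Finset.notMem_Iio_self), add_comm]
    have h4 : ∑ k ∈ Iio i, (c k : ℕ) = ∑ k ∈ Iio i, (b k : ℕ) := by
      refine Finset.sum_congr rfl fun k hk => ?_
      rw [hagree k (Finset.mem_Iio.mp hk)]
    omega
  · have hbiy : (b i : ℕ) = (y i : ℕ) := le_antisymm (hble i) (not_lt.mp hby)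
    have hjy : ∀ j, j < i → (b j : ℕ) = (y j : ℕ) := by
      intro j hj
      by_contra hne
      have hlt2 : (b j : ℕ) < (y j : ℕ) := lt_of_le_of_ne (hble j) hne
      have hIic := claim j hlt2
      have h1 : ∑ k ∈ insert i (Iic j), (c k : ℕ) ≤ deg c :=
        Finset.sum_le_sum_of_subset (Finset.subset_univ _)
      have hini : i ∉ Iic j := by
        simp only [Finset.mem_Iic]
        exact not_le.mpr hj
      rw [Finset.sum_insert hini] at h1
      have h2 : ∑ k ∈ Iic j, (c k : ℕ) = ∑ k ∈ Iic j, (b k : ℕ) := by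
        refine Finset.sum_congr rfl fun k hk => ?_
        rw [hagree k (lt_of_le_of_lt (Finset.mem_Iic.mp hk) hj)]
      omega
    have hylt : toLex y < toLex c := by
      refine (lexlt_iff y c).mpr ⟨i, fun j hj => ?_, ?_⟩
      · have h1 := hjy j hj
        have h2 := hagree j hj
        exact Fin.ext (by rw [← h1, h2])
      · exact Fin.lt_def.mpr (by rw [← hbiy]; exact hbc')
    exact hylt.not_ge hcy
lemma eval_fpoly {𝔽 : Type*} [Field 𝔽] {m : ℕ} {d : Fin m → ℕ}
    (γ : (i : Fin m) → Fin (d i) → 𝔽) (hγ : ∀ i, Function.Injective (γ i))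
    (bb y : (i : Fin m) → Fin (d i)) :
    MvPolynomial.eval (fun i => γ i (y i)) (fpoly γ bb) = 0 ↔ ∃ s, (y s : ℕ) < (bb s : ℕ) := by
  rw [fpoly, map_prod, Finset.prod_eq_zero_iff]
  constructor
  · rintro ⟨s, -, hs⟩
    rw [map_prod, Finset.prod_eq_zero_iff] at hs
    obtain ⟨t, ht, h0⟩ := hs
    simp only [mem_filter, mem_univ, true_and] at ht
    simp only [map_sub, MvPolynomial.eval_X, MvPolynomial.eval_C, sub_eq_zero] at h0
    have : y s = t := hγ s h0
    exact ⟨s, by rw [this]; exact ht⟩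
  · rintro ⟨s, hs⟩
    refine ⟨s, mem_univ s, ?_⟩
    rw [map_prod, Finset.prod_eq_zero_iff]
    exact ⟨y s, by simp only [mem_filter, mem_univ, true_and]; exact hs, by simp⟩

/-- If `a₁ >_lex ⋯ >_lex a_r` are the first `r` elements of `F_{≤ δ}` in descending
lexicographic order, then the number of common zeros of `f_{a₁}, …, f_{a_r}` in
`𝒜 = A₁ × ⋯ × A_m`, where `A_i = {γ_{i,1},…,γ_{i,d_i}}`, equals
`∑ a_{r,i} ∏_{j>i} dⱼ`. -/
theorem stmt13 {𝔽 : Type*} [Field 𝔽] {m : ℕ}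
    (d : Fin m → ℕ) (hd : ∀ i, 0 < d i) (hmono : Monotone d)
    (γ : (i : Fin m) → Fin (d i) → 𝔽) (hγ : ∀ i, Function.Injective (γ i))
    (δ r : ℕ) (hδ : δ ≤ ∑ i, (d i - 1)) (hr : 0 < r)
    (a : Fin r → ((i : Fin m) → Fin (d i)))
    (ha1 : ∀ l, deg (a l) ≤ δ)
    (ha2 : ∀ l l' : Fin r, l < l' → toLex (a l') < toLex (a l))
    (ha3 : ∀ y : (i : Fin m) → Fin (d i), deg y ≤ δ → (∀ l, y ≠ a l) →
      toLex y < toLex (a ⟨r - 1, by omega⟩)) :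
    Set.ncard {P : Fin m → 𝔽 |
        (∀ i, ∃ t, P i = γ i t) ∧ ∀ l, MvPolynomial.eval P (fpoly γ (a l)) = 0}
      = phi (a ⟨r - 1, by omega⟩) := by
  classical
  haveI : WellFoundedLT (Fin m) := inferInstance
  have hlast : (⟨r - 1, by omega⟩ : Fin r) = ⟨r - 1, by omega⟩ := rfl
  set last : Fin r := ⟨r - 1, by omega⟩ with hlastdef
  have amin : ∀ l, toLex (a last) ≤ toLex (a l) := by
    intro l
    rcases eq_or_lt_of_le (show l ≤ last from by
      rw [Fin.le_def]
      have := l.isLt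
      simp only [hlastdef]
      omega) with h | h
    · rw [h]
    · exact (ha2 l last h).le
  have hset : {P : Fin m → 𝔽 |
        (∀ i, ∃ t, P i = γ i t) ∧ ∀ l, MvPolynomial.eval P (fpoly γ (a l)) = 0}
      = (fun (y : (i : Fin m) → Fin (d i)) (i : Fin m) => γ i (y i)) ''
        ↑(univ.filter (fun y : (i : Fin m) → Fin (d i) => toLex y < toLex (a last))) := by
    ext P
    simp only [Set.mem_setOf_eq, Set.mem_image, Finset.mem_coe, Finset.mem_filter,
      Finset.mem_univ, true_and]
    constructor
    · rintro ⟨hP1, hP2⟩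
      choose t ht using hP1
      have hPg : P = fun i => γ i (t i) := funext ht
      have hz : ∀ l, ∃ s, (t s : ℕ) < (a l s : ℕ) := by
        intro l
        have := hP2 l
        rw [hPg] at this
        exact (eval_fpoly γ hγ (a l) t).mp this
      refine ⟨t, ?_, hPg.symm⟩
      by_contra hcon
      replace hcon : toLex (a last) ≤ toLex t := not_lt.mp hcon
      obtain ⟨b, hb1, hb2, hb3⟩ := greedy δ t
      have h4 : toLex (a last) ≤ toLex b := hb3 (a last) (ha1 last) hcon
      have h5 : ∃ l, b = a l := by
        by_contra h6
        push_neg at h6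
        exact absurd (ha3 b hb2 h6) (not_lt.mpr h4)
      obtain ⟨l, hl⟩ := h5
      obtain ⟨s, hs⟩ := hz l
      rw [← hl] at hs
      exact absurd (hb1 s) (not_le.mpr hs)
    · rintro ⟨y, hy, rfl⟩
      refine ⟨fun i => ⟨y i, rfl⟩, fun l => ?_⟩
      rw [eval_fpoly γ hγ (a l) y]
      by_contra h
      push_neg at h
      have hle : a l ≤ y := by
        intro s
        rw [Fin.le_def]
        exact h s
      have := lt_of_lt_of_le hy (le_trans (amin l) (lexmono hle))
      exact lt_irrefl _ this
  rw [hset, Set.ncard_image_of_injective _ ?hinj, Set.ncard_coe_finset]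
  case hinj =>
    intro y y' h
    funext i
    exact hγ i (congrFun h i)
  have := card_lexlt (a last)
  rw [Finset.filter_congr_decidable] at this ⊢
  exact this
end
end

section
/- Let $q$ be a prime power, $A_1,\dots,A_m \subseteq \mathbb{F}_q$ with $|A_i| = d_i$, $d_1 \le \dots \le d_m$, $\mathcal{A} = A_1 \times \cdots \times A_m$, and $d \le \sum_i(d_i-1)$. Write $d = \ell + \sum_{i=1}^j(d_i-1)$ with $j \ge 0$ and $0 \le \ell \le d_{j+1}-1$ (this representation is determined). Then the minimum distance of $AC_q(d,\mathcal{A})$ equals $(d_{j+1}-\ell)\, d_{j+2}\cdots d_m$. -/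
open Finset
open scoped Classical

noncomputable section

lemma my_prodsum {ι : Type*} (s : Finset ι) (b : ι → ℕ) (hb : ∀ i ∈ s, 1 ≤ b i) :
    ∑ i ∈ s, b i + 1 ≤ ∏ i ∈ s, b i + s.card := by
  induction s using Finset.cons_induction with
  | empty => simp
  | cons a s ha ih =>
    have h1 : 1 ≤ b a := hb a (by simp)
    have h2 : 1 ≤ ∏ i ∈ s, b i := Finset.one_le_prod' (fun i hi => hb i (by simp [hi]))
    have h3 : ∑ i ∈ s, b i + 1 ≤ ∏ i ∈ s, b i + s.card := ih (fun i hi => hb i (by simp [hi]))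
    rw [Finset.sum_cons, Finset.prod_cons, Finset.card_cons]
    have hexp : b a * ∏ i ∈ s, b i
        = (b a - 1) * (∏ i ∈ s, b i - 1) + (b a - 1) + (∏ i ∈ s, b i - 1) + 1 := by
      have e1 : b a = (b a - 1) + 1 := by omega
      have e2 : ∏ i ∈ s, b i = (∏ i ∈ s, b i - 1) + 1 := by omega
      calc b a * ∏ i ∈ s, b i = ((b a - 1) + 1) * ((∏ i ∈ s, b i - 1) + 1) := by
            rw [← e1, ← e2]
        _ = (b a - 1) * (∏ i ∈ s, b i - 1) + (b a - 1) + (∏ i ∈ s, b i - 1) + 1 := by ring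
    omega

lemma my_chain (d : ℕ → ℕ) (D : ℕ) :
    ∀ (k j' ℓ ℓ' x : ℕ), (∀ i, j' ≤ i → i ≤ j' + k → 0 < d i ∧ d i ≤ D) →
    ℓ < d (j' + k) → ℓ' < d j' → x < D →
    ℓ' + x = ℓ + ∑ i ∈ Finset.Ico j' (j' + k), (d i - 1) →
    (d (j' + k) - ℓ) * D ≤ (D - x) * ((d j' - ℓ') * ∏ i ∈ Finset.Ico (j' + 1) (j' + k + 1), d i) := by
  intro k
  induction k with
  | zero =>
    intro j' ℓ ℓ' x hbd hℓ hℓ' hx hid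
    simp only [Nat.add_zero, Finset.Ico_self, Finset.sum_empty, Finset.prod_empty, mul_one] at *
    have hdD : d j' ≤ D := (hbd j' le_rfl le_rfl).2
    zify [le_of_lt hℓ, le_of_lt hℓ', le_of_lt hx, hdD]
    nlinarith [hid, hℓ, hℓ', hx, hdD]
  | succ k ih =>
    intro j' ℓ ℓ' x hbd hℓ hℓ' hx hid
    simp only [show j' + (k + 1) = j' + 1 + k from by omega] at hbd hℓ hid ⊢
    have hj'bd := hbd j' le_rfl (by omega)
    have hj1bd := hbd (j' + 1) (by omega) (by omega)
    have hsum : ∑ i ∈ Finset.Ico j' (j' + 1 + k), (d i - 1)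
        = (d j' - 1) + ∑ i ∈ Finset.Ico (j' + 1) (j' + 1 + k), (d i - 1) :=
      Finset.sum_eq_sum_Ico_succ_bot (by omega) _
    have hid'' : 0 + (x - (d j' - 1 - ℓ')) = ℓ + ∑ i ∈ Finset.Ico (j' + 1) (j' + 1 + k), (d i - 1) := by
      omega
    have hIH := ih (j' + 1) ℓ 0 (x - (d j' - 1 - ℓ'))
      (fun i hi1 hi2 => hbd i (by omega) (by omega))
      hℓ (by omega) (by omega) hid''
    have hprod : ∏ i ∈ Finset.Ico (j' + 1) (j' + 1 + k + 1), d i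
        = d (j' + 1) * ∏ i ∈ Finset.Ico (j' + 1 + 1) (j' + 1 + k + 1), d i :=
      Finset.prod_eq_prod_Ico_succ_bot (by omega) _
    rw [hprod]
    refine le_trans hIH ?_
    have key : D - (x - (d j' - 1 - ℓ')) ≤ (D - x) * (d j' - ℓ') := by
      have hc1 : 1 ≤ D - x := by omega
      have hmul : (D - x) * (d j' - ℓ') = (D - x) * (d j' - ℓ' - 1) + (D - x) * 1 := by
        rw [← Nat.mul_add]; congr 1; omega
      have hge : d j' - ℓ' - 1 ≤ (D - x) * (d j' - ℓ' - 1) := Nat.le_mul_of_pos_left _ hc1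
      omega
    calc (D - (x - (d j' - 1 - ℓ'))) * ((d (j' + 1) - 0)
            * ∏ i ∈ Finset.Ico (j' + 1 + 1) (j' + 1 + k + 1), d i)
        ≤ ((D - x) * (d j' - ℓ')) * ((d (j' + 1) - 0)
            * ∏ i ∈ Finset.Ico (j' + 1 + 1) (j' + 1 + k + 1), d i) := Nat.mul_le_mul_right _ key
      _ = (D - x) * ((d j' - ℓ') * (d (j' + 1)
            * ∏ i ∈ Finset.Ico (j' + 1 + 1) (j' + 1 + k + 1), d i)) := by
          rw [Nat.sub_zero]; ring

lemma my_numeric : ∀ (m : ℕ) (d a : ℕ → ℕ),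
    (∀ i k, i ≤ k → k < m → 0 < d i ∧ d i ≤ d k) →
    (∀ i, i < m → a i < d i) →
    ∀ j ℓ, j < m → ℓ < d j →
    ∑ i ∈ Finset.range m, a i ≤ ℓ + ∑ i ∈ Finset.range j, (d i - 1) →
    (d j - ℓ) * ∏ i ∈ Finset.Ioo j m, d i ≤ ∏ i ∈ Finset.range m, (d i - a i) := by
  intro m
  induction m with
  | zero => intro d a _ _ j ℓ hj; omega
  | succ m ih =>
    intro d a hd ha j ℓ hj hℓ hsum
    rcases Nat.lt_or_ge j m with hjm | hjm
    · -- j < m : peel the last coordinate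
      have ham : a m < d m := ha m (by omega)
      have hsum' : ∑ i ∈ Finset.range (m + 1), a i = ∑ i ∈ Finset.range m, a i + a m :=
        Finset.sum_range_succ _ _
      have hamδ : a m ≤ ℓ + ∑ i ∈ Finset.range j, (d i - 1) := by omega
      obtain ⟨δt, hδt⟩ : ∃ t, ℓ + ∑ i ∈ Finset.range j, (d i - 1) - a m = t := ⟨_, rfl⟩
      obtain ⟨j', hj'⟩ : ∃ x, Nat.findGreatest (fun k => ∑ i ∈ Finset.range k, (d i - 1) ≤ δt) j = x :=
        ⟨_, rfl⟩
      have hPj' : ∑ i ∈ Finset.range j', (d i - 1) ≤ δt := by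
        have := Nat.findGreatest_spec (P := fun k => ∑ i ∈ Finset.range k, (d i - 1) ≤ δt)
          (Nat.zero_le j) (by simp)
        rwa [hj'] at this
      have hj'le : j' ≤ j := by rw [← hj']; exact Nat.findGreatest_le j
      obtain ⟨ℓ', hℓ'⟩ : ∃ x, δt - ∑ i ∈ Finset.range j', (d i - 1) = x := ⟨_, rfl⟩
      have hsplit : ∑ i ∈ Finset.range j', (d i - 1) + ∑ i ∈ Finset.Ico j' j, (d i - 1)
          = ∑ i ∈ Finset.range j, (d i - 1) := by
        simp only [Finset.range_eq_Ico]
        exact Finset.sum_Ico_consecutive _ (Nat.zero_le j') hj'le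
      have hℓ'lt : ℓ' < d j' := by
        rcases Nat.lt_or_ge j' j with hlt | hge
        · have hnP : ¬ (∑ i ∈ Finset.range (j' + 1), (d i - 1) ≤ δt) :=
            Nat.findGreatest_is_greatest
              (P := fun k => ∑ i ∈ Finset.range k, (d i - 1) ≤ δt) (n := j) (k := j' + 1)
              (by rw [hj']; omega) (by omega)
          have hsucc : ∑ i ∈ Finset.range (j' + 1), (d i - 1)
              = ∑ i ∈ Finset.range j', (d i - 1) + (d j' - 1) := Finset.sum_range_succ _ _
          have hdj' : 0 < d j' := (hd j' j' le_rfl (by omega)).1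
          omega
        · have hjj : j' = j := by omega
          have hdj : 0 < d j := (hd j j le_rfl (by omega)).1
          rw [hjj] at hℓ' ⊢
          omega
      have hj'm : j' < m := by omega
      have hIH := ih d a (fun i k hik hkm => hd i k hik (by omega)) (fun i him => ha i (by omega))
        j' ℓ' hj'm hℓ'lt (by omega)
      have hch := my_chain d (d m) (j - j') j' ℓ ℓ' (a m)
        (fun i hi1 hi2 => ⟨(hd i i le_rfl (by omega)).1, (hd i m (by omega) (by omega)).2⟩)
        (by rw [show j' + (j - j') = j from by omega]; exact hℓ) hℓ'lt ham ?_
      swap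
      · rw [show j' + (j - j') = j from by omega]
        omega
      rw [show j' + (j - j') = j from by omega] at hch
      have hIoo1 : ∏ i ∈ Finset.Ioo j' m, d i
          = (∏ i ∈ Finset.Ico (j' + 1) (j + 1), d i) * ∏ i ∈ Finset.Ico (j + 1) m, d i := by
        rw [← Finset.Ico_add_one_left_eq_Ioo]
        exact (Finset.prod_Ico_consecutive _ (by omega) (by omega)).symm
      have hIoo2 : ∏ i ∈ Finset.Ioo j (m + 1), d i
          = (∏ i ∈ Finset.Ico (j + 1) m, d i) * d m := by
        rw [← Finset.Ico_add_one_left_eq_Ioo]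
        rw [Finset.prod_Ico_succ_top (by omega)]
      calc (d j - ℓ) * ∏ i ∈ Finset.Ioo j (m + 1), d i
          = ((d j - ℓ) * d m) * ∏ i ∈ Finset.Ico (j + 1) m, d i := by rw [hIoo2]; ring
        _ ≤ ((d m - a m) * ((d j' - ℓ') * ∏ i ∈ Finset.Ico (j' + 1) (j + 1), d i))
              * ∏ i ∈ Finset.Ico (j + 1) m, d i := Nat.mul_le_mul_right _ hch
        _ = ((d j' - ℓ') * ∏ i ∈ Finset.Ioo j' m, d i) * (d m - a m) := by rw [hIoo1]; ring
        _ ≤ (∏ i ∈ Finset.range m, (d i - a i)) * (d m - a m) :=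
              Nat.mul_le_mul_right _ hIH
        _ = ∏ i ∈ Finset.range (m + 1), (d i - a i) := (Finset.prod_range_succ _ _).symm
    · -- j = m : product/sum trick
      have hjm' : j = m := by omega
      subst hjm'
      have hIoo : Finset.Ioo j (j + 1) = ∅ := by
        ext i; simp
      rw [hIoo, Finset.prod_empty, mul_one]
      have hps : ∑ i ∈ Finset.range (j + 1), (d i - a i) + 1
          ≤ ∏ i ∈ Finset.range (j + 1), (d i - a i) + (j + 1) := by
        have := my_prodsum (Finset.range (j + 1)) (fun i => d i - a i)
          (fun i hi => show 1 ≤ d i - a i by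
            have := ha i (Finset.mem_range.mp hi); omega)
        simpa using this
      have hsum1 : ∑ i ∈ Finset.range (j + 1), (d i - a i) + ∑ i ∈ Finset.range (j + 1), a i
          = ∑ i ∈ Finset.range (j + 1), d i := by
        rw [← Finset.sum_add_distrib]
        refine Finset.sum_congr rfl (fun i hi => ?_)
        have := ha i (Finset.mem_range.mp hi)
        omega
      have hsum2 : ∑ i ∈ Finset.range j, (d i - 1) + j = ∑ i ∈ Finset.range j, d i := by
        have : ∑ i ∈ Finset.range j, (d i - 1) + ∑ i ∈ Finset.range j, 1
            = ∑ i ∈ Finset.range j, d i := by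
          rw [← Finset.sum_add_distrib]
          refine Finset.sum_congr rfl (fun i hi => ?_)
          have := (hd i i le_rfl (by have := Finset.mem_range.mp hi; omega)).1
          omega
        simpa using this
      have hsum3 : ∑ i ∈ Finset.range (j + 1), d i = ∑ i ∈ Finset.range j, d i + d j :=
        Finset.sum_range_succ _ _
      omega

lemma my_footprint {𝔽 : Type*} [Field 𝔽] [Fintype 𝔽] :
    ∀ (m : ℕ) (d : Fin m → ℕ) (A : Fin m → Finset 𝔽), (∀ i, d i ≤ (A i).card) →
    ∀ f : MvPolynomial (Fin m) 𝔽, f ≠ 0 →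
    ∃ a ∈ f.support, ∏ i, (d i - a i) ≤
      (Finset.univ.filter (fun P : Fin m → 𝔽 =>
        (∀ i, P i ∈ A i) ∧ MvPolynomial.eval P f ≠ 0)).card := by
  intro m
  induction m with
  | zero =>
    intro d A hA f hf
    have hc : MvPolynomial.coeff 0 f ≠ 0 := by
      intro h
      apply hf
      rw [MvPolynomial.eq_C_of_isEmpty f, h, map_zero]
    refine ⟨0, MvPolynomial.mem_support_iff.mpr hc, ?_⟩
    have h1 : (1:ℕ) ≤ (Finset.univ.filter (fun P : Fin 0 → 𝔽 =>
        (∀ i, P i ∈ A i) ∧ MvPolynomial.eval P f ≠ 0)).card := by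
      refine Finset.card_pos.mpr ⟨fun i => i.elim0, Finset.mem_filter.mpr
        ⟨Finset.mem_univ _, fun i => i.elim0, ?_⟩⟩
      rw [MvPolynomial.eq_C_of_isEmpty f, MvPolynomial.eval_C]
      exact hc
    simpa using h1
  | succ m ih =>
    intro d A hA f hf
    set q := MvPolynomial.finSuccEquiv 𝔽 m f with hqdef
    have hq0 : q ≠ 0 := by
      intro h
      apply hf
      have h2 : MvPolynomial.finSuccEquiv 𝔽 m f = MvPolynomial.finSuccEquiv 𝔽 m 0 := by
        rw [← hqdef, h, map_zero]
      exact (MvPolynomial.finSuccEquiv 𝔽 m).injective h2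
    set t := q.natDegree with ht
    have hc : q.coeff t ≠ 0 := by
      have := Polynomial.leadingCoeff_ne_zero.mpr hq0
      rwa [Polynomial.leadingCoeff] at this
    obtain ⟨a', ha'sup, ha'le⟩ := ih (fun i => d i.succ) (fun i => A i.succ)
      (fun i => hA i.succ) (q.coeff t) hc
    refine ⟨Finsupp.cons t a', ?_, ?_⟩
    · rw [MvPolynomial.mem_support_iff]
      rw [← MvPolynomial.finSuccEquiv_coeff_coeff]
      exact MvPolynomial.mem_support_iff.mp ha'sup
    -- notation
    set N' := Finset.univ.filter (fun y : Fin m → 𝔽 =>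
      (∀ i, y i ∈ A i.succ) ∧ MvPolynomial.eval y (q.coeff t) ≠ 0) with hN'
    set G : (Fin m → 𝔽) → Finset 𝔽 := fun y =>
      (A 0).filter (fun x => Polynomial.eval x (q.map (MvPolynomial.eval y)) ≠ 0) with hG
    have hGcard : ∀ y ∈ N', d 0 - t ≤ (G y).card := by
      intro y hy
      obtain ⟨-, -, hyc⟩ := Finset.mem_filter.mp hy
      set py := q.map (MvPolynomial.eval y) with hpy
      have hpy0 : py ≠ 0 := by
        intro h
        apply hyc
        have : py.coeff t = 0 := by rw [h]; simp
        rwa [Polynomial.coeff_map] at this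
      have hdeg : py.natDegree ≤ t := Polynomial.natDegree_map_le
      have hZ : ((A 0).filter (fun x => Polynomial.eval x py = 0)).card ≤ t := by
        refine le_trans (Polynomial.card_le_degree_of_subset_roots (p := py) ?_) hdeg
        intro x hx
        rw [Finset.mem_val, Finset.mem_filter] at hx
        rw [Polynomial.mem_roots hpy0]
        exact hx.2
      have hpart := Finset.card_filter_add_card_filter_not
        (s := A 0) (p := fun x => Polynomial.eval x py = 0)
      have hA0 := hA 0
      have : (G y).card = ((A 0).filter (fun x => ¬ (Polynomial.eval x py = 0))).card := rfl
      omega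
    -- the injection from the sigma set
    have hkey : (N'.sigma G).card ≤ (Finset.univ.filter (fun P : Fin (m+1) → 𝔽 =>
        (∀ i, P i ∈ A i) ∧ MvPolynomial.eval P f ≠ 0)).card := by
      refine Finset.card_le_card_of_injOn (fun p => Fin.cons p.2 p.1) ?_ ?_
      · rintro ⟨y, x⟩ hp
        rw [Finset.mem_coe, Finset.mem_sigma] at hp
        obtain ⟨hy, hx⟩ := hp
        obtain ⟨-, hyA, -⟩ := Finset.mem_filter.mp hy
        obtain ⟨hxA, hxe⟩ := Finset.mem_filter.mp hx
        rw [Finset.mem_coe]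
        refine Finset.mem_filter.mpr ⟨Finset.mem_univ _, ?_, ?_⟩
        · intro i
          refine Fin.cases ?_ ?_ i
          · simpa using hxA
          · intro i; simpa using hyA i
        · rw [MvPolynomial.eval_eq_eval_mv_eval']
          exact hxe
      · rintro ⟨y, x⟩ hp ⟨y', x'⟩ hp' h
        simp only at h
        rw [Fin.cons_inj] at h
        obtain ⟨rfl, rfl⟩ := h
        rfl
    have hsig : (N'.sigma G).card = ∑ y ∈ N', (G y).card := Finset.card_sigma _ _
    have hsum : N'.card * (d 0 - t) ≤ ∑ y ∈ N', (G y).card := by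
      calc N'.card * (d 0 - t) = ∑ _y ∈ N', (d 0 - t) := by
            rw [Finset.sum_const, smul_eq_mul]
        _ ≤ ∑ y ∈ N', (G y).card := Finset.sum_le_sum hGcard
    have hprod : ∏ i : Fin (m+1), (d i - (Finsupp.cons t a') i)
        = (d 0 - t) * ∏ i : Fin m, (d i.succ - a' i) := by
      rw [Fin.prod_univ_succ, Finsupp.cons_zero]
      exact congrArg _ (Finset.prod_congr rfl fun i _ => by rw [Finsupp.cons_succ])
    rw [hprod]
    calc (d 0 - t) * ∏ i : Fin m, (d i.succ - a' i)
        ≤ (d 0 - t) * N'.card := Nat.mul_le_mul_left _ ha'le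
      _ = N'.card * (d 0 - t) := Nat.mul_comm _ _
      _ ≤ ∑ y ∈ N', (G y).card := hsum
      _ = (N'.sigma G).card := hsig.symm
      _ ≤ _ := hkey

section Helpers

variable {M : Type*}

lemma my_fin_sum_dite [AddCommMonoid M] (m : ℕ) (G : Fin m → M) :
    ∑ i : Fin m, G i = ∑ k ∈ Finset.range m, (if h : k < m then G ⟨k, h⟩ else 0) := by
  rw [Finset.sum_range]
  exact Finset.sum_congr rfl fun i _ => by simp [Fin.eta]

lemma my_fin_prod_dite [CommMonoid M] (m : ℕ) (G : Fin m → M) :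
    ∏ i : Fin m, G i = ∏ k ∈ Finset.range m, (if h : k < m then G ⟨k, h⟩ else 1) := by
  rw [Finset.prod_range]
  exact Finset.prod_congr rfl fun i _ => by simp [Fin.eta]

lemma my_filter_lt (m j : ℕ) (hj : j ≤ m) :
    (Finset.range m).filter (fun k => k < j) = Finset.range j := by
  ext k; simp only [Finset.mem_filter, Finset.mem_range]; omega

lemma my_filter_gt (m j : ℕ) :
    (Finset.range m).filter (fun k => j < k) = Finset.Ioo j m := by
  ext k; simp only [Finset.mem_filter, Finset.mem_range, Finset.mem_Ioo]; omega

/-- Convert a Fin-indexed filtered sum to a range sum. -/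
lemma my_sum_filter_lt [AddCommMonoid M] (m j : ℕ) (hj : j ≤ m) (G : Fin m → M) :
    ∑ i ∈ Finset.univ.filter (fun i : Fin m => (i : ℕ) < j), G i
      = ∑ k ∈ Finset.range j, (if h : k < m then G ⟨k, h⟩ else 0) := by
  rw [Finset.sum_filter, my_fin_sum_dite m (fun i => if (i : ℕ) < j then G i else 0),
    ← my_filter_lt m j hj, Finset.sum_filter]
  refine Finset.sum_congr rfl fun k hk => ?_
  have hkm : k < m := by have := Finset.mem_range.mp hk; omega
  simp only [dif_pos hkm]

lemma my_prod_filter_gt [CommMonoid M] (m j : ℕ) (G : Fin m → M) :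
    ∏ i ∈ Finset.univ.filter (fun i : Fin m => j < (i : ℕ)), G i
      = ∏ k ∈ Finset.Ioo j m, (if h : k < m then G ⟨k, h⟩ else 1) := by
  rw [Finset.prod_filter, my_fin_prod_dite m (fun i => if j < (i : ℕ) then G i else 1),
    ← my_filter_gt m j, Finset.prod_filter]
  refine Finset.prod_congr rfl fun k hk => ?_
  have hkm : k < m := Finset.mem_range.mp hk
  simp only [dif_pos hkm]

end Helpers

/-- Write `δ = ℓ + ∑_{i=1}^{j} (dᵢ - 1)` with `0 ≤ ℓ ≤ d_{j+1} - 1`. Then the minimum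
distance of `AC_q(δ, 𝒜)` equals `(d_{j+1} - ℓ) d_{j+2} ⋯ d_m` (indices `1`-based; here the
index `j` is `0`-based, so `d_{j+1}` is `d ⟨j, _⟩`). Stated as: that value is the least
Hamming weight of a nonzero codeword. -/
theorem stmt16 {𝔽 : Type*} [Field 𝔽] [Fintype 𝔽] {m : ℕ}
    (d : Fin m → ℕ) (hd : ∀ i, 0 < d i) (hmono : Monotone d)
    (A : Fin m → Finset 𝔽) (hcard : ∀ i, (A i).card = d i)
    (δ : ℕ) (hδ : δ ≤ ∑ i, (d i - 1))
    (j : ℕ) (hj : j < m) (ℓ : ℕ) (hℓ : ℓ ≤ d ⟨j, hj⟩ - 1)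
    (hrep : δ = ℓ + ∑ i ∈ Finset.univ.filter (fun i : Fin m => (i : ℕ) < j), (d i - 1)) :
    IsLeast {N : ℕ | ∃ f : MvPolynomial (Fin m) 𝔽,
        f.totalDegree ≤ δ ∧ (∀ i, f.degreeOf i < d i) ∧
        (∃ P : Fin m → 𝔽, (∀ i, P i ∈ A i) ∧ MvPolynomial.eval P f ≠ 0) ∧
        N = Set.ncard {P : Fin m → 𝔽 | (∀ i, P i ∈ A i) ∧ MvPolynomial.eval P f ≠ 0}}
      ((d ⟨j, hj⟩ - ℓ) * ∏ i ∈ Finset.univ.filter (fun i : Fin m => j < (i : ℕ)), d i) := by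
  have hℓlt : ℓ < d ⟨j, hj⟩ := by have := hd ⟨j, hj⟩; omega
  constructor
  · -- membership
    have hAne : ∀ i, (A i).Nonempty := fun i => Finset.card_pos.mp (by rw [hcard i]; exact hd i)
    choose α hα using hAne
    obtain ⟨B, hBsub, hBcard⟩ := Finset.exists_subset_card_eq (s := A ⟨j, hj⟩) (n := ℓ) (by rw [hcard]; omega)
    set S : Fin m → Finset 𝔽 := fun i =>
      if (i : ℕ) < j then (A i).erase (α i) else if (i : ℕ) = j then B else ∅ with hSdef
    have hSi : ∀ i, S i = if (i : ℕ) < j then (A i).erase (α i)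
        else if (i : ℕ) = j then B else ∅ := fun i => rfl
    have hSsub : ∀ i, S i ⊆ A i := by
      intro i
      rw [hSi i]
      split
      · exact Finset.erase_subset _ _
      · split
        · rename_i h1 h2
          rw [show i = ⟨j, hj⟩ from Fin.ext h2]
          exact hBsub
        · exact Finset.empty_subset _
    have hScard : ∀ i : Fin m, (S i).card
        = if (i : ℕ) < j then d i - 1 else if (i : ℕ) = j then ℓ else 0 := by
      intro i
      rw [hSi i]
      split
      · rw [Finset.card_erase_of_mem (hα i), hcard i]
      · split
        · exact hBcard
        · simp
    set f : MvPolynomial (Fin m) 𝔽 :=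
      ∏ i : Fin m, ∏ c ∈ S i, (MvPolynomial.X i - MvPolynomial.C c) with hfdef
    have hXC : ∀ (i : Fin m) (c : 𝔽),
        (MvPolynomial.X (R := 𝔽) i - MvPolynomial.C c).totalDegree ≤ 1 := by
      intro i c
      rw [sub_eq_add_neg, ← map_neg]
      refine le_trans (MvPolynomial.totalDegree_add _ _) ?_
      simp [MvPolynomial.totalDegree_X, MvPolynomial.totalDegree_C]
    have hsum1 : ∑ i ∈ Finset.univ.filter (fun i : Fin m => (i : ℕ) < j), (S i).card
        = ∑ i ∈ Finset.univ.filter (fun i : Fin m => (i : ℕ) < j), (d i - 1) :=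
      Finset.sum_congr rfl fun i hi => by
        rw [hScard i, if_pos (Finset.mem_filter.mp hi).2]
    have hsum2 : ∑ i ∈ Finset.univ.filter (fun i : Fin m => ¬ (i : ℕ) < j), (S i).card = ℓ := by
      have hcong : ∀ i ∈ Finset.univ.filter (fun i : Fin m => ¬ (i : ℕ) < j),
          (S i).card = if i = ⟨j, hj⟩ then ℓ else 0 := by
        intro i hi
        have hnlt := (Finset.mem_filter.mp hi).2
        rw [hScard i, if_neg hnlt]
        by_cases h : (i : ℕ) = j
        · rw [if_pos h, if_pos (Fin.ext h)]
        · rw [if_neg h, if_neg (fun hh => h (by rw [hh]))]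
      rw [Finset.sum_congr rfl hcong,
        Finset.sum_ite_eq' _ ((⟨j, hj⟩ : Fin m)) (fun _ => ℓ)]
      rw [if_pos (by simp)]
    have hsumcard : ∑ i : Fin m, (S i).card = δ := by
      rw [← Finset.sum_filter_add_sum_filter_not Finset.univ (fun i : Fin m => (i : ℕ) < j),
        hsum1, hsum2, hrep, add_comm]
    have htot : f.totalDegree ≤ δ := by
      rw [hfdef]
      refine le_trans (MvPolynomial.totalDegree_finset_prod _ _) ?_
      rw [← hsumcard]
      refine Finset.sum_le_sum fun i _ => ?_
      refine le_trans (MvPolynomial.totalDegree_finset_prod _ _) ?_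
      refine le_trans (Finset.sum_le_sum (s := S i)
        (f := fun c => (MvPolynomial.X i - MvPolynomial.C c).totalDegree)
        (g := fun _ => 1) (fun c _ => hXC i c)) ?_
      simp
    have hdegXC : ∀ (k i : Fin m) (c : 𝔽),
        (MvPolynomial.X (R := 𝔽) i - MvPolynomial.C c).degreeOf k ≤ if k = i then 1 else 0 := by
      intro k i c
      refine le_trans (MvPolynomial.degreeOf_sub_le _ _ _) ?_
      rw [MvPolynomial.degreeOf_X, MvPolynomial.degreeOf_C]
      simp
    have hScardlt : ∀ k : Fin m, (S k).card < d k := by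
      intro k
      have hdk := hd k
      rw [hScard k]
      split
      · omega
      · split
        · rename_i h1 h2
          have hk : k = ⟨j, hj⟩ := Fin.ext h2
          rw [hk]
          omega
        · omega
    have hdegi : ∀ k, f.degreeOf k < d k := by
      intro k
      refine lt_of_le_of_lt ?_ (hScardlt k)
      rw [hfdef]
      refine le_trans (MvPolynomial.degreeOf_prod_le _ _ _) ?_
      have h2 : ∀ i : Fin m, (∏ c ∈ S i, (MvPolynomial.X i - MvPolynomial.C c)).degreeOf k
          ≤ if k = i then (S i).card else 0 := by
        intro i
        refine le_trans (MvPolynomial.degreeOf_prod_le _ _ _) ?_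
        have hstep := Finset.sum_le_sum (s := S i)
          (f := fun c => MvPolynomial.degreeOf k (MvPolynomial.X i - MvPolynomial.C c))
          (g := fun _ => if k = i then 1 else 0) (fun c _ => hdegXC k i c)
        rw [Finset.sum_const, smul_eq_mul] at hstep
        refine le_trans hstep ?_
        by_cases hk : k = i <;> simp [hk]
      refine le_trans (Finset.sum_le_sum (fun i _ => h2 i)) ?_
      rw [Finset.sum_ite_eq Finset.univ k (fun i => (S i).card)]
      simp
    have heval : ∀ P : Fin m → 𝔽,
        MvPolynomial.eval P f = ∏ i : Fin m, ∏ c ∈ S i, (P i - c) := by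
      intro P
      rw [hfdef, map_prod]
      refine Finset.prod_congr rfl fun i _ => ?_
      rw [map_prod]
      refine Finset.prod_congr rfl fun c _ => ?_
      rw [map_sub, MvPolynomial.eval_X, MvPolynomial.eval_C]
    have hne0 : ∀ P : Fin m → 𝔽, (MvPolynomial.eval P f ≠ 0 ↔ ∀ i, P i ∉ S i) := by
      intro P
      rw [heval P, Finset.prod_ne_zero_iff]
      constructor
      · intro h i hmem
        have h2 := h i (Finset.mem_univ i)
        rw [Finset.prod_ne_zero_iff] at h2
        exact h2 (P i) hmem (by simp)
      · intro h i _
        rw [Finset.prod_ne_zero_iff]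
        intro c hc
        exact sub_ne_zero.mpr (fun heq => h i (by rwa [heq]))
    have hsetEq : {P : Fin m → 𝔽 | (∀ i, P i ∈ A i) ∧ MvPolynomial.eval P f ≠ 0}
        = {P : Fin m → 𝔽 | ∀ i, P i ∈ A i \ S i} := by
      ext P
      simp only [Set.mem_setOf_eq, hne0 P, Finset.mem_sdiff]
      constructor
      · rintro ⟨hPA, hn⟩ i
        exact ⟨hPA i, hn i⟩
      · intro h
        exact ⟨fun i => (h i).1, fun i => (h i).2⟩
    have hcount : {P : Fin m → 𝔽 | ∀ i, P i ∈ A i \ S i}.ncard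
        = ∏ i : Fin m, ((A i) \ S i).card := by
      rw [Set.ncard_eq_toFinset_card']
      rw [show {P : Fin m → 𝔽 | ∀ i, P i ∈ A i \ S i}.toFinset
          = Fintype.piFinset (fun i => A i \ S i) from by
        ext P; simp [Fintype.mem_piFinset]]
      exact Fintype.card_piFinset _
    have hTcard : ∀ i : Fin m, ((A i) \ S i).card
        = if (i : ℕ) < j then 1 else if (i : ℕ) = j then d ⟨j, hj⟩ - ℓ else d i := by
      intro i
      rw [Finset.card_sdiff_of_subset (hSsub i), hcard i, hScard i]
      have hdi := hd i
      by_cases h1 : (i : ℕ) < j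
      · rw [if_pos h1, if_pos h1]
        exact Nat.sub_sub_self hdi
      · rw [if_neg h1, if_neg h1]
        by_cases h2 : (i : ℕ) = j
        · rw [if_pos h2, if_pos h2, show i = ⟨j, hj⟩ from Fin.ext h2]
        · rw [if_neg h2, if_neg h2]
          exact Nat.sub_zero _
    have hprodT : ∏ i : Fin m, ((A i) \ S i).card
        = (d ⟨j, hj⟩ - ℓ) * ∏ i ∈ Finset.univ.filter (fun i : Fin m => j < (i : ℕ)), d i := by
      rw [← Finset.prod_filter_mul_prod_filter_not Finset.univ (fun i : Fin m => j < (i : ℕ))]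
      have hA1 : ∏ i ∈ Finset.univ.filter (fun i : Fin m => j < (i : ℕ)), ((A i) \ S i).card
          = ∏ i ∈ Finset.univ.filter (fun i : Fin m => j < (i : ℕ)), d i :=
        Finset.prod_congr rfl fun i hi => by
          have hgt := (Finset.mem_filter.mp hi).2
          rw [hTcard i, if_neg (Nat.lt_asymm hgt), if_neg (Ne.symm (Nat.ne_of_lt hgt))]
      have hB1 : ∏ i ∈ Finset.univ.filter (fun i : Fin m => ¬ j < (i : ℕ)), ((A i) \ S i).card
          = d ⟨j, hj⟩ - ℓ := by
        have hcong : ∀ i ∈ Finset.univ.filter (fun i : Fin m => ¬ j < (i : ℕ)),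
            ((A i) \ S i).card = if i = ⟨j, hj⟩ then d ⟨j, hj⟩ - ℓ else 1 := by
          intro i hi
          have hle := (Finset.mem_filter.mp hi).2
          rw [hTcard i]
          by_cases h : (i : ℕ) = j
          · rw [if_neg (show ¬ (i : ℕ) < j from h ▸ lt_irrefl j), if_pos h, if_pos (Fin.ext h)]
          · rw [if_pos (lt_of_le_of_ne (Nat.le_of_not_lt hle) h),
              if_neg (fun hh => h (by rw [hh]))]
        rw [Finset.prod_congr rfl hcong,
          Finset.prod_ite_eq' _ ((⟨j, hj⟩ : Fin m)) (fun _ => d ⟨j, hj⟩ - ℓ)]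
        rw [if_pos (by simp)]
      rw [hA1, hB1, mul_comm]
    have hvpos : 0 < (d ⟨j, hj⟩ - ℓ) * ∏ i ∈ Finset.univ.filter
        (fun i : Fin m => j < (i : ℕ)), d i :=
      Nat.mul_pos (Nat.sub_pos_of_lt hℓlt) (Finset.prod_pos fun i _ => hd i)
    have hne : {P : Fin m → 𝔽 | ∀ i, P i ∈ A i \ S i}.Nonempty := by
      apply (Set.ncard_pos (Set.toFinite _)).mp
      rw [hcount, hprodT]
      exact hvpos
    obtain ⟨P, hP⟩ := hne
    have hPmem : P ∈ {P : Fin m → 𝔽 | (∀ i, P i ∈ A i) ∧ MvPolynomial.eval P f ≠ 0} := by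
      rw [hsetEq]; exact hP
    refine ⟨f, htot, hdegi, ⟨P, hPmem.1, hPmem.2⟩, ?_⟩
    rw [hsetEq, hcount, hprodT]
  · -- lower bound
    rintro N ⟨f, hdeg, hdegi, ⟨P0, hP0A, hP0e⟩, rfl⟩
    have hf0 : f ≠ 0 := by rintro rfl; simp at hP0e
    obtain ⟨a, hasup, hale⟩ := my_footprint m d A (fun i => (hcard i).ge) f hf0
    have hncard : Set.ncard {P : Fin m → 𝔽 | (∀ i, P i ∈ A i) ∧ MvPolynomial.eval P f ≠ 0}
        = (Finset.univ.filter (fun P : Fin m → 𝔽 =>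
            (∀ i, P i ∈ A i) ∧ MvPolynomial.eval P f ≠ 0)).card := by
      rw [Set.ncard_eq_toFinset_card']
      congr 1
      ext P
      simp
    rw [hncard]
    -- numeric bound
    have haidi : ∀ i : Fin m, a i < d i :=
      fun i => lt_of_le_of_lt (MvPolynomial.monomial_le_degreeOf i hasup) (hdegi i)
    have hasum : ∑ i : Fin m, a i ≤ δ := by
      refine le_trans ?_ hdeg
      refine le_trans (le_of_eq ?_) (MvPolynomial.le_totalDegree hasup)
      exact (Finsupp.sum_fintype a (fun _ e => e) (fun _ => rfl)).symm
    have hnum := my_numeric m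
      (fun k => if h : k < m then d ⟨k, h⟩ else 1)
      (fun k => if h : k < m then a ⟨k, h⟩ else 0)
      ?_ ?_ j ℓ hj ?_ ?_
    · -- assemble
      have eTgt : (d ⟨j, hj⟩ - ℓ) * ∏ i ∈ Finset.univ.filter (fun i : Fin m => j < (i : ℕ)), d i
          = ((if h : j < m then d ⟨j, h⟩ else 1) - ℓ)
            * ∏ i ∈ Finset.Ioo j m, (if h : i < m then d ⟨i, h⟩ else 1) := by
        rw [my_prod_filter_gt m j d]
        simp only [dif_pos hj]
      have eProd : ∏ k ∈ Finset.range m,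
          ((if h : k < m then d ⟨k, h⟩ else 1) - (if h : k < m then a ⟨k, h⟩ else 0))
          = ∏ i : Fin m, (d i - a i) := by
        rw [my_fin_prod_dite m (fun i => d i - a i)]
        refine Finset.prod_congr rfl fun k hk => ?_
        have hkm : k < m := Finset.mem_range.mp hk
        simp only [dif_pos hkm]
      rw [eTgt]
      exact le_trans hnum (le_trans (le_of_eq eProd) hale)
    · -- monotone/pos
      intro i k hik hkm
      simp only [dif_pos (lt_of_le_of_lt hik hkm), dif_pos hkm]
      exact ⟨hd _, hmono (by exact hik)⟩
    · intro i him
      simp only [dif_pos him]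
      exact haidi _
    · simp only [dif_pos hj]; exact hℓlt
    · -- sum bound
      rw [show ∑ k ∈ Finset.range m, (if h : k < m then a ⟨k, h⟩ else 0)
          = ∑ i : Fin m, a i from (my_fin_sum_dite m a).symm]
      have e1 : ∑ i ∈ Finset.univ.filter (fun i : Fin m => (i : ℕ) < j), (d i - 1)
          = ∑ k ∈ Finset.range j, ((if h : k < m then d ⟨k, h⟩ else 1) - 1) := by
        rw [my_sum_filter_lt m j (le_of_lt hj) (fun i => d i - 1)]
        refine Finset.sum_congr rfl fun k hk => ?_
        have hkm : k < m := lt_of_lt_of_le (Finset.mem_range.mp hk) (le_of_lt hj)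
        simp only [dif_pos hkm]
      rw [← e1, ← hrep]
      exact hasum
end
end
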